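/- arXiv:1207.4843 — 3 statements merged into one kernel-verified Lean document; each statement's English description precedes it below -/
import Mathlib

section
/- Let Δ > 0, f ∈ M_Δ, 0 < ρ < r_*(f)Δ/4, γ > 0. Then there exists δ₁ > 0 such that whenever g, h ∈ M_Δ with D(f,g) ≤ δ₁ and D(f,h) ≤ δ₁, for each ball B(x,r) centered in K(g) with r ∈ [r_*(g)Δ/2, Δ/2] there exists a ball B(y, r−ρ) centered in K(h) such that λ(h)(B(y,r−ρ)) − γ ≤ λ(g)(B(x,r)). -/
open Metric Set MeasureTheory ENNReal Filter

noncomputable section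

abbrev Euc (d : ℕ) : Type := EuclideanSpace ℝ (Fin d)

/-- A `δ`-packing of `E`: a countable family of pairwise disjoint open balls with
centers in `E` and radii at most `δ` (radius `0` gives an empty ball, allowing
finite packings). -/
def IsPacking {d : ℕ} (δ : ℝ) (E : Set (Euc d)) (c : ℕ → Euc d) (ρ : ℕ → ℝ) : Prop :=
  (∀ n, c n ∈ E) ∧ (∀ n, 0 ≤ ρ n ∧ ρ n ≤ δ) ∧
    ∀ m n, m ≠ n → Disjoint (ball (c m) (ρ m)) (ball (c n) (ρ n))

/-- `P^s_δ(E)`: the supremum of `∑ diam(B_i)^s` over all `δ`-packings of `E`. -/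
noncomputable def packCount {d : ℕ} (s δ : ℝ) (E : Set (Euc d)) : ℝ≥0∞ :=
  ⨆ (c : ℕ → Euc d) (ρ : ℕ → ℝ) (_ : IsPacking δ E c ρ),
    ∑' n, if 0 < ρ n then ENNReal.ofReal ((2 * ρ n) ^ s) else 0

/-- The `s`-dimensional packing premeasure `P₀^s(E) = inf_{δ>0} P^s_δ(E)`. -/
noncomputable def packingPre {d : ℕ} (s : ℝ) (E : Set (Euc d)) : ℝ≥0∞ :=
  ⨅ (δ : ℝ) (_ : 0 < δ), packCount s δ E

/-- The `s`-dimensional packing measure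
`P^s(E) = inf { ∑ P₀^s(E_n) : E ⊆ ⋃ E_n }`. -/
noncomputable def packingMeasure {d : ℕ} (s : ℝ) (E : Set (Euc d)) : ℝ≥0∞ :=
  ⨅ (F : ℕ → Set (Euc d)) (_ : E ⊆ ⋃ n, F n), ∑' n, packingPre s (F n)

/-- Composition `f_{i₁} ∘ ⋯ ∘ f_{i_k}` along a word. -/
def wcomp {d N : ℕ} (f : Fin N → Euc d → Euc d) : List (Fin N) → Euc d → Euc d
  | [] => id
  | i :: w => f i ∘ wcomp f w

/-- `K` is in general position: it is not contained in any proper affine subspace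
(in particular, in no hyperplane). -/
def GeneralPosition {d : ℕ} (K : Set (Euc d)) : Prop :=
  ∀ H : AffineSubspace ℝ (Euc d), K ⊆ (H : Set (Euc d)) → H = ⊤


/-- A self-similar IFS of contracting similitudes on a compact set `X ⊆ ℝ^d`,
bundled with its attractor `K`. -/
structure IFS (d N : ℕ) (X : Set (Euc d)) where
  f : Fin N → Euc d → Euc d
  r : Fin N → ℝ
  r_pos : ∀ i, 0 < r i
  r_lt1 : ∀ i, r i < 1
  sim : ∀ i x y, dist (f i x) (f i y) = r i * dist x y
  maps : ∀ i, f i '' X ⊆ X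
  K : Set (Euc d)
  K_sub : K ⊆ X
  K_cpt : IsCompact K
  K_ne : K.Nonempty
  K_inv : K = ⋃ i, f i '' K

/-- `D(F,G) ≤ δ`, where `D(F,G) = max_i ‖f_i − g_i‖_∞` (supremum over `X`). -/
def Dle {d N : ℕ} {X : Set (Euc d)} (F G : IFS d N X) (δ : ℝ) : Prop :=
  ∀ i, ∀ x ∈ X, dist (F.f i x) (G.f i x) ≤ δ

/-- Membership in `M_Δ`: the attractor pieces are pairwise at distance `> Δ`. -/
def sep {d N : ℕ} {X : Set (Euc d)} (Δ : ℝ) (F : IFS d N X) : Prop :=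
  ∀ i j, i ≠ j → ∀ p ∈ F.f i '' F.K, ∀ q ∈ F.f j '' F.K, Δ < dist p q

/-- Membership in `M_SSC`: the attractor pieces are pairwise disjoint. -/
def ssc {d N : ℕ} {X : Set (Euc d)} (F : IFS d N X) : Prop :=
  ∀ i j, i ≠ j → Disjoint (F.f i '' F.K) (F.f j '' F.K)

/-- Membership in `M_OSC`: the open set condition holds with some bounded
nonempty open set. -/
def osc {d N : ℕ} {X : Set (Euc d)} (F : IFS d N X) : Prop :=
  ∃ O : Set (Euc d), IsOpen O ∧ O.Nonempty ∧ Bornology.IsBounded O ∧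
    (∀ i, F.f i '' O ⊆ O) ∧ ∀ i j, i ≠ j → Disjoint (F.f i '' O) (F.f j '' O)


namespace Aux15

variable {d N : ℕ} {X : Set (Euc d)}




theorem ifs_cont (F : IFS d N X) (i : Fin N) : Continuous (F.f i) := by
  refine (LipschitzWith.of_dist_le_mul (K := (F.r i).toNNReal) (f := F.f i) ?_).continuous
  intro x y
  rw [F.sim i x y, Real.coe_toNNReal _ (F.r_pos i).le]

theorem wcomp_cons {f : Fin N → Euc d → Euc d} (i : Fin N) (w : List (Fin N)) (z : Euc d) :
    wcomp f (i :: w) z = f i (wcomp f w z) := rfl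

theorem wcomp_cont (F : IFS d N X) (w : List (Fin N)) : Continuous (wcomp F.f w) := by
  induction w with
  | nil => exact continuous_id
  | cons i w ih => exact (ifs_cont F i).comp ih

theorem wcomp_mapsX (F : IFS d N X) (w : List (Fin N)) {z : Euc d} (hz : z ∈ X) :
    wcomp F.f w z ∈ X := by
  induction w with
  | nil => exact hz
  | cons i w ih => exact F.maps i ⟨_, ih, rfl⟩

theorem f_mapsK (F : IFS d N X) (i : Fin N) {z : Euc d} (hz : z ∈ F.K) :
    F.f i z ∈ F.K := by
  rw [F.K_inv]
  exact mem_iUnion.2 ⟨i, ⟨z, hz, rfl⟩⟩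

theorem wcomp_mapsK (F : IFS d N X) (w : List (Fin N)) {z : Euc d} (hz : z ∈ F.K) :
    wcomp F.f w z ∈ F.K := by
  induction w with
  | nil => exact hz
  | cons i w ih => exact f_mapsK F i ih

theorem wcomp_dist (F : IFS d N X) {c : ℝ} (hc : ∀ i, F.r i ≤ c) (hc0 : 0 ≤ c)
    (w : List (Fin N)) (x y : Euc d) :
    dist (wcomp F.f w x) (wcomp F.f w y) ≤ c ^ w.length * dist x y := by
  induction w with
  | nil => simp [wcomp]
  | cons i w ih =>
    rw [wcomp_cons, wcomp_cons, F.sim i, List.length_cons, pow_succ, mul_comm (c ^ w.length) c,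
      mul_assoc]
    exact mul_le_mul (hc i) ih (by positivity) hc0

/-- closeness of iterated systems -/
theorem wcomp_close (A B : IFS d N X) {c δ : ℝ} (hc : ∀ i, A.r i ≤ c) (hc0 : 0 ≤ c)
    (hc1 : c < 1) (hδ0 : 0 ≤ δ) (hd : ∀ i, ∀ z ∈ X, dist (A.f i z) (B.f i z) ≤ δ)
    (w : List (Fin N)) {z : Euc d} (hz : z ∈ X) :
    dist (wcomp A.f w z) (wcomp B.f w z) ≤ δ / (1 - c) := by
  have h1c : 0 < 1 - c := by linarith
  induction w with
  | nil => simpa [wcomp] using div_nonneg hδ0 h1c.le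
  | cons i w ih =>
    rw [wcomp_cons, wcomp_cons]
    calc dist (A.f i (wcomp A.f w z)) (B.f i (wcomp B.f w z))
        ≤ dist (A.f i (wcomp A.f w z)) (A.f i (wcomp B.f w z))
          + dist (A.f i (wcomp B.f w z)) (B.f i (wcomp B.f w z)) := dist_triangle _ _ _
      _ ≤ c * (δ / (1 - c)) + δ := by
          gcongr
          · rw [A.sim i]
            exact mul_le_mul (hc i) ih dist_nonneg hc0
          · exact hd i _ (wcomp_mapsX B w hz)
      _ = (c * δ + (1 - c) * δ) / (1 - c) := by field_simp
      _ = δ / (1 - c) := by ring_nf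

/-- depth-n covering of the attractor -/
theorem K_cover (F : IFS d N X) (n : ℕ) {x : Euc d} (hx : x ∈ F.K) :
    ∃ w : List (Fin N), w.length = n ∧ ∃ z ∈ F.K, x = wcomp F.f w z := by
  induction n generalizing x with
  | zero => exact ⟨[], rfl, x, hx, rfl⟩
  | succ n ih =>
    have hx' := hx
    rw [F.K_inv] at hx'
    obtain ⟨i, ⟨z, hz, rfl⟩⟩ := mem_iUnion.1 hx'
    obtain ⟨w, hwl, z', hz', hzw⟩ := ih hz
    exact ⟨i :: w, by simp [hwl], z', hz', by rw [wcomp_cons, hzw]⟩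

/-- attractor closeness -/
theorem K_close (A B : IFS d N X) (hX : IsCompact X) {c δ : ℝ}
    (hcA : ∀ i, A.r i ≤ c) (hcB : ∀ i, B.r i ≤ c) (hc0 : 0 ≤ c)
    (hc1 : c < 1) (hδ0 : 0 ≤ δ) (hd : ∀ i, ∀ z ∈ X, dist (A.f i z) (B.f i z) ≤ δ)
    (n : ℕ) {x : Euc d} (hx : x ∈ A.K) :
    ∃ y ∈ B.K, dist x y ≤ δ / (1 - c) + c ^ n * diam X := by
  obtain ⟨w, hwl, z, hz, rfl⟩ := K_cover A n hx
  obtain ⟨k, hk⟩ := B.K_ne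
  refine ⟨wcomp B.f w k, wcomp_mapsK B w hk, ?_⟩
  calc dist (wcomp A.f w z) (wcomp B.f w k)
      ≤ dist (wcomp A.f w z) (wcomp B.f w z) + dist (wcomp B.f w z) (wcomp B.f w k) :=
        dist_triangle _ _ _
    _ ≤ δ / (1 - c) + c ^ n * diam X := by
        gcongr
        · exact wcomp_close A B hcA hc0 hc1 hδ0 hd w (A.K_sub hz)
        · calc dist (wcomp B.f w z) (wcomp B.f w k) ≤ c ^ w.length * dist z k :=
              wcomp_dist B hcB hc0 w z k
            _ ≤ c ^ n * diam X := by
              rw [hwl]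
              gcongr
              exact dist_le_diam_of_mem hX.isBounded (A.K_sub hz) (B.K_sub hk)



theorem prod_diff {ι : Type*} (s : Finset ι) (u v : ι → ℝ) (b : ℝ) (hb : 0 ≤ b)
    (hu : ∀ i ∈ s, 0 ≤ u i ∧ u i ≤ 1) (hv : ∀ i ∈ s, 0 ≤ v i ∧ v i ≤ 1)
    (hd : ∀ i ∈ s, |u i - v i| ≤ b) :
    |∏ i ∈ s, u i - ∏ i ∈ s, v i| ≤ s.card * b := by
  classical
  induction s using Finset.induction_on with
  | empty => simp
  | insert a s hnotmem ih =>
    have hus := fun i hi => hu i (Finset.mem_insert_of_mem hi)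
    have hvs := fun i hi => hv i (Finset.mem_insert_of_mem hi)
    have hds := fun i hi => hd i (Finset.mem_insert_of_mem hi)
    have ha := hu a (Finset.mem_insert_self a s)
    have ha' := hv a (Finset.mem_insert_self a s)
    have hda := hd a (Finset.mem_insert_self a s)
    rw [Finset.prod_insert hnotmem, Finset.prod_insert hnotmem, Finset.card_insert_of_notMem hnotmem]
    have hP : |∏ i ∈ s, v i| ≤ 1 := by
      rw [abs_of_nonneg (Finset.prod_nonneg fun i hi => (hvs i hi).1)]
      exact Finset.prod_le_one (fun i hi => (hvs i hi).1) (fun i hi => (hvs i hi).2)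
    have hkey : u a * ∏ i ∈ s, u i - v a * ∏ i ∈ s, v i
        = u a * (∏ i ∈ s, u i - ∏ i ∈ s, v i) + (u a - v a) * ∏ i ∈ s, v i := by ring
    rw [hkey]
    calc |u a * (∏ i ∈ s, u i - ∏ i ∈ s, v i) + (u a - v a) * ∏ i ∈ s, v i|
        ≤ |u a * (∏ i ∈ s, u i - ∏ i ∈ s, v i)| + |(u a - v a) * ∏ i ∈ s, v i| := abs_add_le _ _
      _ = |u a| * |∏ i ∈ s, u i - ∏ i ∈ s, v i| + |u a - v a| * |∏ i ∈ s, v i| := by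
          rw [abs_mul, abs_mul]
      _ ≤ 1 * (s.card * b) + b * 1 := by
          refine add_le_add (mul_le_mul ?_ (ih hus hvs hds) (abs_nonneg _) one_pos.le)
            (mul_le_mul hda hP (abs_nonneg _) hb)
          rw [abs_of_nonneg ha.1]; exact ha.2
      _ = (s.card + 1) * b := by ring
      _ = (↑(s.card + 1)) * b := by push_cast; ring



/-- Continuity of the natural weights with respect to the contraction ratios. -/
theorem weight_close {N : ℕ} (hN : 2 ≤ N) (r : Fin N → ℝ)
    (hr0 : ∀ i, 0 < r i) (hr1 : ∀ i, r i < 1) {γ₂ : ℝ} (hγ₂ : 0 < γ₂) :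
    ∃ η > 0, ∃ a : Fin N → ℝ, ∀ ρ : Fin N → ℝ, (∀ i, |ρ i - r i| ≤ η) →
      ∀ s : ℝ, (∑ i, ρ i ^ s = 1) → 0 ≤ s ∧ ∀ i, |ρ i ^ s - a i| ≤ γ₂ := by
  have hNpos : 0 < N := by omega
  haveI : NeZero N := ⟨by omega⟩
  have hne : (Finset.univ : Finset (Fin N)).Nonempty := Finset.univ_nonempty
  -- the maximal ratio
  set m : ℝ := Finset.univ.sup' hne r with hm
  have hm1 : m < 1 := (Finset.sup'_lt_iff hne).2 fun i _ => hr1 i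
  have hm0 : 0 < m := lt_of_lt_of_le (hr0 ⟨0, hNpos⟩) (Finset.le_sup' r (Finset.mem_univ _))
  -- φ is continuous
  set φ : ℝ → ℝ := fun s => ∑ i, r i ^ s with hφ
  have hφc : Continuous φ := by
    refine continuous_finset_sum _ fun i _ => ?_
    exact (Real.continuous_exp.comp (continuous_const.mul continuous_id)).congr
      fun s => (Real.rpow_def_of_pos (hr0 i) s).symm
  -- find S with φ S ≤ 1
  obtain ⟨n₀, hn₀⟩ :=
    ((tendsto_pow_atTop_nhds_zero_of_lt_one hm0.le hm1).eventually_lt_const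
      (show (0:ℝ) < 1/N by positivity)).exists
  have hφS : φ (n₀ : ℝ) ≤ 1 := by
    have : φ (n₀ : ℝ) ≤ ∑ _i : Fin N, m ^ n₀ := by
      refine Finset.sum_le_sum fun i _ => ?_
      rw [Real.rpow_natCast]
      exact pow_le_pow_left₀ (hr0 i).le (Finset.le_sup' r (Finset.mem_univ i)) n₀
    rw [Finset.sum_const, Finset.card_univ, Fintype.card_fin, nsmul_eq_mul] at this
    calc φ (n₀ : ℝ) ≤ N * m ^ n₀ := this
      _ ≤ N * (1/N) :=
          mul_le_mul_of_nonneg_left hn₀.le (Nat.cast_nonneg N)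
      _ = 1 := by field_simp
  -- IVT gives the similarity exponent sF
  have hφ0 : (1:ℝ) ≤ φ 0 := by
    simp only [hφ, Real.rpow_zero, Finset.sum_const, Finset.card_univ, Fintype.card_fin,
      nsmul_eq_mul, mul_one]
    exact_mod_cast Nat.one_le_of_lt hN
  obtain ⟨sF, hsFmem, hsF⟩ : ∃ sF ∈ Icc (0:ℝ) n₀, φ sF = 1 := by
    have := intermediate_value_Icc' (by positivity : (0:ℝ) ≤ (n₀:ℝ)) hφc.continuousOn
      (⟨hφS, hφ0⟩ : (1:ℝ) ∈ Icc (φ (n₀:ℝ)) (φ 0))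
    obtain ⟨sF, hmem, heq⟩ := this
    exact ⟨sF, hmem, heq⟩
  have hsF0 : 0 < sF := by
    rcases lt_or_eq_of_le hsFmem.1 with h | h
    · exact h
    · exfalso
      rw [← h] at hsF
      simp only [hφ, Real.rpow_zero, Finset.sum_const, Finset.card_univ, Fintype.card_fin,
        nsmul_eq_mul, mul_one] at hsF
      have : (2:ℝ) ≤ (N:ℝ) := by exact_mod_cast hN
      linarith
  -- joint continuity at each (r i, sF)
  have Hcont : ∀ i : Fin N, ∃ δ > 0, ∀ u v : ℝ, |u - r i| < δ → |v - sF| < δ →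
      |u ^ v - r i ^ sF| < γ₂ := by
    intro i
    have hca : ContinuousAt (fun p : ℝ × ℝ => p.1 ^ p.2) (r i, sF) :=
      Real.continuousAt_rpow _ (Or.inl (hr0 i).ne')
    rw [Metric.continuousAt_iff] at hca
    obtain ⟨δ, hδ0, hδ⟩ := hca γ₂ hγ₂
    refine ⟨δ, hδ0, fun u v hu hv => ?_⟩
    have : dist ((u, v) : ℝ × ℝ) (r i, sF) < δ := by
      rw [Prod.dist_eq]
      simp only [Real.dist_eq]
      exact max_lt hu hv
    simpa [Real.dist_eq] using hδ this
  choose δf hδf0 hδf using Hcont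
  set εa : ℝ := min (Finset.univ.inf' hne δf / 2) (sF / 2) with hεa
  have hinf0 : 0 < Finset.univ.inf' hne δf := (Finset.lt_inf'_iff hne).2 fun i _ => hδf0 i
  have hεa0 : 0 < εa := lt_min (by positivity) (by positivity)
  have hεalt : ∀ i, εa < δf i := fun i =>
    lt_of_le_of_lt (min_le_left _ _) (lt_of_lt_of_le (by linarith : Finset.univ.inf' hne δf / 2
      < Finset.univ.inf' hne δf) (Finset.inf'_le δf (Finset.mem_univ i)))
  have hεasF : εa ≤ sF / 2 := min_le_right _ _
  -- continuity of the perturbed sums in the perturbation size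
  set g : ℝ → ℝ := fun η => ∑ i, (r i + η) ^ (sF + εa) with hgdef
  set h : ℝ → ℝ := fun η => ∑ i, (r i - η) ^ (sF - εa) with hhdef
  have hgc : ContinuousAt g 0 := by
    refine tendsto_finset_sum _ fun i _ => ?_
    refine ContinuousAt.rpow ((continuous_const.add continuous_id).continuousAt)
      continuousAt_const (Or.inl ?_)
    simpa using (hr0 i).ne'
  have hhc : ContinuousAt h 0 := by
    refine tendsto_finset_sum _ fun i _ => ?_
    refine ContinuousAt.rpow ((continuous_const.sub continuous_id).continuousAt)
      continuousAt_const (Or.inl ?_)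
    simpa using (hr0 i).ne'
  have hg0 : g 0 < 1 := by
    have : g 0 < φ sF := by
      simp only [hgdef, add_zero]
      exact Finset.sum_lt_sum_of_nonempty hne fun i _ =>
        Real.rpow_lt_rpow_of_exponent_gt (hr0 i) (hr1 i) (by linarith)
    rwa [hsF] at this
  have hh0 : 1 < h 0 := by
    have : φ sF < h 0 := by
      simp only [hhdef, sub_zero]
      exact Finset.sum_lt_sum_of_nonempty hne fun i _ =>
        Real.rpow_lt_rpow_of_exponent_gt (hr0 i) (hr1 i) (by linarith)
    rwa [hsF] at this
  have hev : ∀ᶠ η' in nhds (0:ℝ), g η' < 1 ∧ 1 < h η' :=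
    (hgc.eventually_lt_const hg0).and (hhc.eventually_const_lt hh0)
  rw [Metric.eventually_nhds_iff] at hev
  obtain ⟨η'', hη''0, hη''⟩ := hev
  -- extreme ratio bounds
  set rmin : ℝ := Finset.univ.inf' hne r with hrmin
  set rgap : ℝ := Finset.univ.inf' hne (fun i => 1 - r i) with hrgap
  have hrmin0 : 0 < rmin := (Finset.lt_inf'_iff hne).2 fun i _ => hr0 i
  have hrgap0 : 0 < rgap := (Finset.lt_inf'_iff hne).2 fun i _ => by linarith [hr1 i]
  set η : ℝ := min (min εa (η''/2)) (min (rmin/2) (rgap/2)) with hηdef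
  have hη0 : 0 < η := lt_min (lt_min hεa0 (by positivity)) (lt_min (by positivity) (by positivity))
  have hηεa : η ≤ εa := le_trans (min_le_left _ _) (min_le_left _ _)
  have hηη'' : η < η'' := lt_of_le_of_lt (le_trans (min_le_left _ _) (min_le_right _ _))
    (by linarith)
  have hηrmin : η ≤ rmin/2 := le_trans (min_le_right _ _) (min_le_left _ _)
  have hηrgap : η ≤ rgap/2 := le_trans (min_le_right _ _) (min_le_right _ _)
  refine ⟨η, hη0, fun i => r i ^ sF, fun ρ hρ s hsum => ?_⟩
  have hρlo : ∀ i, rmin/2 ≤ ρ i := by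
    intro i
    have h1 : r i - η ≤ ρ i := by
      have := abs_le.1 (hρ i); linarith [this.1]
    have h2 : rmin ≤ r i := Finset.inf'_le r (Finset.mem_univ i)
    linarith
  have hρpos : ∀ i, 0 < ρ i := fun i => lt_of_lt_of_le (by linarith) (hρlo i)
  have hρhi : ∀ i, ρ i ≤ r i + η := by
    intro i; have := abs_le.1 (hρ i); linarith [this.2]
  have hρlt1 : ∀ i, ρ i < 1 := by
    intro i
    have h2 : rgap ≤ 1 - r i := Finset.inf'_le _ (Finset.mem_univ i)
    have := hρhi i
    linarith [hηrgap, hrgap0]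
  have hGH := hη'' (show dist η 0 < η'' by rwa [Real.dist_eq, sub_zero, abs_of_pos hη0])
  -- the exponent s is trapped near sF
  have hslo : sF - εa < s := by
    by_contra hcon
    push_neg at hcon
    have hkey : h η ≤ ∑ i, ρ i ^ s := by
      refine Finset.sum_le_sum fun i _ => ?_
      have e1 : (r i - η) ^ (sF - εa) ≤ ρ i ^ (sF - εa) := by
        refine Real.rpow_le_rpow ?_ ?_ (by linarith)
        · have h2 : rmin ≤ r i := Finset.inf'_le r (Finset.mem_univ i)
          linarith
        · have := abs_le.1 (hρ i); linarith [this.1]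
      have e2 : ρ i ^ (sF - εa) ≤ ρ i ^ s :=
        Real.rpow_le_rpow_of_exponent_ge (hρpos i) (hρlt1 i).le hcon
      linarith
    rw [hsum] at hkey
    linarith [hGH.2]
  have hshi : s < sF + εa := by
    by_contra hcon
    push_neg at hcon
    have hkey : ∑ i, ρ i ^ s ≤ g η := by
      refine Finset.sum_le_sum fun i _ => ?_
      have e1 : ρ i ^ s ≤ ρ i ^ (sF + εa) :=
        Real.rpow_le_rpow_of_exponent_ge (hρpos i) (hρlt1 i).le hcon
      have e2 : ρ i ^ (sF + εa) ≤ (r i + η) ^ (sF + εa) :=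
        Real.rpow_le_rpow (hρpos i).le (hρhi i) (by linarith)
      linarith
    rw [hsum] at hkey
    linarith [hGH.1]
  have hs0 : 0 ≤ s := by linarith
  refine ⟨hs0, fun i => ?_⟩
  have h1 : |ρ i - r i| < δf i := lt_of_le_of_lt (le_trans (hρ i) hηεa) (hεalt i)
  have h2 : |s - sF| < δf i := lt_of_le_of_lt (abs_le.2 ⟨by linarith, by linarith⟩) (hεalt i)
  exact (hδf i (ρ i) s h1 h2).le

theorem ofFn_cons {n : ℕ} (i : Fin N) (v : Fin n → Fin N) :
    List.ofFn (Fin.cons i v : Fin (n+1) → Fin N) = i :: List.ofFn v := by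
  rw [List.ofFn_succ]
  simp

theorem iter_inv (F : IFS d N X) (s : ℝ) (μ : Measure (Euc d))
    (hinv : ∀ A : Set (Euc d), MeasurableSet A →
      μ A = ∑ i, ENNReal.ofReal (F.r i ^ s) * μ (F.f i ⁻¹' A))
    (n : ℕ) (A : Set (Euc d)) (hA : MeasurableSet A) :
    μ A = ∑ w : Fin n → Fin N,
      ENNReal.ofReal (∏ k, F.r (w k) ^ s) * μ ((wcomp F.f (List.ofFn w)) ⁻¹' A) := by
  induction n generalizing A with
  | zero => simp [wcomp]
  | succ n ih =>
    rw [hinv A hA]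
    rw [← Equiv.sum_comp (Fin.consEquiv (fun _ : Fin (n+1) => Fin N))]
    rw [Fintype.sum_prod_type]
    refine Finset.sum_congr rfl fun i _ => ?_
    rw [ih (F.f i ⁻¹' A) (hA.preimage (ifs_cont F i).measurable), Finset.mul_sum]
    refine Finset.sum_congr rfl fun v _ => ?_
    have h1 : (Fin.consEquiv (fun _ : Fin (n+1) => Fin N)) (i, v) = Fin.cons i v := rfl
    rw [h1, ofFn_cons]
    have h2 : (wcomp F.f (i :: List.ofFn v)) ⁻¹' A
        = (wcomp F.f (List.ofFn v)) ⁻¹' (F.f i ⁻¹' A) := rfl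
    rw [h2]
    rw [Fin.prod_univ_succ]
    simp only [Fin.cons_zero, Fin.cons_succ]
    rw [ENNReal.ofReal_mul (Real.rpow_nonneg (F.r_pos i).le s)]
    ring

theorem weight_sum_one (F : IFS d N X) (s : ℝ) (μ : Measure (Euc d))
    [IsProbabilityMeasure μ]
    (hinv : ∀ A : Set (Euc d), MeasurableSet A →
      μ A = ∑ i, ENNReal.ofReal (F.r i ^ s) * μ (F.f i ⁻¹' A)) (n : ℕ) :
    ∑ w : Fin n → Fin N, ENNReal.ofReal (∏ k, F.r (w k) ^ s) = 1 := by
  have := iter_inv F s μ hinv n univ MeasurableSet.univ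
  simpa using this.symm

theorem muK_eq_one (F : IFS d N X) (hX : IsCompact X) {c : ℝ} (hc : ∀ i, F.r i ≤ c)
    (hc0 : 0 ≤ c) (hc1 : c < 1) (s : ℝ) (μ : Measure (Euc d)) [IsProbabilityMeasure μ]
    (hinv : ∀ A : Set (Euc d), MeasurableSet A →
      μ A = ∑ i, ENNReal.ofReal (F.r i ^ s) * μ (F.f i ⁻¹' A)) :
    μ F.K = 1 := by
  obtain ⟨k₀, hk₀⟩ := F.K_ne
  -- every open set containing K has measure 1
  have key : ∀ U : Set (Euc d), IsOpen U → F.K ⊆ U → μ U = 1 := by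
    intro U hU hKU
    obtain ⟨ε, hε, hthick⟩ := F.K_cpt.exists_thickening_subset_open hU hKU
    refine le_antisymm prob_le_one ?_
    have hcb : ∀ R : ℕ, μ (closedBall k₀ R) ≤ μ U := by
      intro R
      -- choose n with c ^ n * R < ε
      have htend : Tendsto (fun n : ℕ => c ^ n * (R : ℝ)) atTop (nhds 0) := by
        simpa using (tendsto_pow_atTop_nhds_zero_of_lt_one hc0 hc1).mul_const (R : ℝ)
      obtain ⟨n, hn⟩ := (htend.eventually (eventually_lt_nhds hε)).exists
      have hsub : ∀ w : Fin n → Fin N,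
          closedBall k₀ R ⊆ (wcomp F.f (List.ofFn w)) ⁻¹' U := by
        intro w x hx
        have hd : dist (wcomp F.f (List.ofFn w) x) (wcomp F.f (List.ofFn w) k₀)
            ≤ c ^ n * (R : ℝ) := by
          have := wcomp_dist F hc hc0 (List.ofFn w) x k₀
          rw [List.length_ofFn] at this
          calc dist _ _ ≤ c ^ n * dist x k₀ := this
            _ ≤ c ^ n * (R : ℝ) :=
                mul_le_mul_of_nonneg_left (mem_closedBall.1 hx) (pow_nonneg hc0 n)
        refine hthick ?_
        rw [mem_thickening_iff]
        exact ⟨wcomp F.f (List.ofFn w) k₀, wcomp_mapsK F _ hk₀, lt_of_le_of_lt hd hn⟩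
      calc μ (closedBall k₀ R)
          = ∑ w : Fin n → Fin N, ENNReal.ofReal (∏ k, F.r (w k) ^ s) * μ (closedBall k₀ R) := by
            rw [← Finset.sum_mul, weight_sum_one F s μ hinv n, one_mul]
        _ ≤ ∑ w : Fin n → Fin N,
            ENNReal.ofReal (∏ k, F.r (w k) ^ s) * μ ((wcomp F.f (List.ofFn w)) ⁻¹' U) := by
            exact Finset.sum_le_sum fun w _ =>
              mul_le_mul_right (measure_mono (hsub w)) _
        _ = μ U := (iter_inv F s μ hinv n U hU.measurableSet).symm
    have : μ (⋃ R : ℕ, closedBall k₀ R) ≤ μ U := by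
      rw [Directed.measure_iUnion ?_]
      · exact iSup_le hcb
      · exact Monotone.directed_le fun a b hab => closedBall_subset_closedBall (by exact_mod_cast hab)
    rw [Metric.iUnion_closedBall_nat, measure_univ] at this
    exact this
  by_contra hne
  have hlt : μ F.K < 1 := lt_of_le_of_ne prob_le_one hne
  obtain ⟨U, hKU, hU, hUlt⟩ := F.K.exists_isOpen_lt_of_lt 1 hlt
  rw [key U hU hKU] at hUlt
  exact lt_irrefl _ hUlt


end Aux15

set_option maxHeartbeats 1000000 in
/-- Lemma 3.2: for `f ∈ M_Δ`, `0 < ρ < r_*(f)Δ/4` and `γ > 0`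
there is `δ₁ > 0` such that for `g, h ∈ M_Δ` with `D(f,g) ≤ δ₁`, `D(f,h) ≤ δ₁`,
every ball `B(x,r)` centered in `K(g)` with `r ∈ [r_*(g)Δ/2, Δ/2]` admits a ball
`B(y,r−ρ)` centered in `K(h)` with `λ(h)(B(y,r−ρ)) − γ ≤ λ(g)(B(x,r))`. -/
theorem stmt15
    {d N : ℕ} (hN : 2 ≤ N) (X : Set (Euc d)) (hX : IsCompact X)
    (Δ : ℝ) (hΔ : 0 < Δ)
    (F : IFS d N X) (hF : sep Δ F)
    (rF : ℝ) (hrF : IsLeast (Set.range F.r) rF)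
    (ρ : ℝ) (hρ0 : 0 < ρ) (hρ : ρ < rF * Δ / 4) (γ : ℝ) (hγ : 0 < γ) :
    ∃ δ₁ > (0 : ℝ), ∀ G H : IFS d N X, sep Δ G → sep Δ H →
      Dle F G δ₁ → Dle F H δ₁ →
      ∀ sG sH : ℝ, (∑ i, G.r i ^ sG = 1) → (∑ i, H.r i ^ sH = 1) →
      ∀ μG : Measure (Euc d), IsProbabilityMeasure μG →
      (∀ A : Set (Euc d), MeasurableSet A →
        μG A = ∑ i, ENNReal.ofReal (G.r i ^ sG) * μG (G.f i ⁻¹' A)) →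
      ∀ μH : Measure (Euc d), IsProbabilityMeasure μH →
      (∀ A : Set (Euc d), MeasurableSet A →
        μH A = ∑ i, ENNReal.ofReal (H.r i ^ sH) * μH (H.f i ⁻¹' A)) →
      ∀ rG : ℝ, IsLeast (Set.range G.r) rG →
      ∀ x ∈ G.K, ∀ t ∈ Set.Icc (rG * Δ / 2) (Δ / 2),
        ∃ y ∈ H.K, μH (ball y (t - ρ)) ≤ μG (ball x t) + ENNReal.ofReal γ := by
  classical
  have hNpos : 0 < N := by omega
  haveI : NeZero N := ⟨by omega⟩
  have hne : (Finset.univ : Finset (Fin N)).Nonempty := Finset.univ_nonempty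
  obtain ⟨k₀, hk₀⟩ := F.K_ne
  -- contraction bounds
  set c0 : ℝ := Finset.univ.sup' hne F.r with hc0def
  have hc01 : c0 < 1 := (Finset.sup'_lt_iff hne).2 fun i _ => F.r_lt1 i
  have hc00 : 0 < c0 :=
    lt_of_lt_of_le (F.r_pos ⟨0, hNpos⟩) (Finset.le_sup' F.r (Finset.mem_univ _))
  set c : ℝ := (1 + c0) / 2 with hcdef
  have hcc0 : c0 < c := by rw [hcdef]; linarith
  have hc1 : c < 1 := by rw [hcdef]; linarith
  have hcpos : 0 < c := by rw [hcdef]; linarith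
  have h1c : 0 < 1 - c := by linarith
  have h1c0 : 0 < 1 - c0 := by linarith
  have hFc : ∀ i, F.r i ≤ c :=
    fun i => le_trans (Finset.le_sup' F.r (Finset.mem_univ i)) hcc0.le
  set DX : ℝ := diam X with hDXdef
  have hDX0 : 0 ≤ DX := diam_nonneg
  -- choose the depth n
  have htd : Tendsto (fun k : ℕ => c ^ k * DX) atTop (nhds 0) := by
    simpa using (tendsto_pow_atTop_nhds_zero_of_lt_one hcpos.le hc1).mul_const DX
  obtain ⟨n, hn⟩ := (htd.eventually_lt_const (show (0:ℝ) < ρ/6 by linarith)).exists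
  -- choose the weight tolerance
  set γ₂ : ℝ := γ / ((N:ℝ)^n * (2*n+1) + 1) with hγ₂def
  have hNn0 : (0:ℝ) < (N:ℝ)^n := by positivity
  have hγ₂0 : 0 < γ₂ := by
    rw [hγ₂def]
    have : (0:ℝ) < (N:ℝ)^n * (2*n+1) + 1 := by positivity
    positivity
  obtain ⟨η, hη0, a, ha⟩ := Aux15.weight_close hN F.r F.r_pos F.r_lt1 hγ₂0
  set δ₁ : ℝ := min (min ((1-c)*ρ/16) (η*Δ/2)) ((1-c0)*Δ/4) with hδ₁def
  have hδ₁0 : 0 < δ₁ := by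
    refine lt_min (lt_min ?_ ?_) ?_ <;> positivity
  refine ⟨δ₁, hδ₁0, ?_⟩
  intro G H hsepG hsepH hDG hDH sG sH hsG hsH μG hμGP hμGinv μH hμHP hμHinv rG hrG x hx t ht
  have hδ₁ρ : δ₁ ≤ (1-c)*ρ/16 := le_trans (min_le_left _ _) (min_le_left _ _)
  have hδ₁η : δ₁ ≤ η*Δ/2 := le_trans (min_le_left _ _) (min_le_right _ _)
  have hδ₁c0 : δ₁ ≤ (1-c0)*Δ/4 := min_le_right _ _
  -- two points of X at distance > Δ
  set i0 : Fin N := ⟨0, by omega⟩ with hi0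
  set j0 : Fin N := ⟨1, by omega⟩ with hj0
  have hij : i0 ≠ j0 := by simp [hi0, hj0, Fin.ext_iff]
  set p : Euc d := F.f i0 k₀ with hp
  set q : Euc d := F.f j0 k₀ with hq
  have hpq : Δ < dist p q := hF i0 j0 hij p ⟨k₀, hk₀, rfl⟩ q ⟨k₀, hk₀, rfl⟩
  have hpX : p ∈ X := F.K_sub (Aux15.f_mapsK F i0 hk₀)
  have hqX : q ∈ X := F.K_sub (Aux15.f_mapsK F j0 hk₀)
  -- ratio closeness
  have hratio : ∀ (E : IFS d N X), Dle F E δ₁ → ∀ i, |E.r i - F.r i| ≤ 2*δ₁/Δ := by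
    intro E hDE i
    have h1 : |dist (E.f i p) (E.f i q) - dist (F.f i p) (F.f i q)|
        ≤ dist (E.f i p) (F.f i p) + dist (E.f i q) (F.f i q) := by
      have := dist_dist_dist_le (E.f i p) (E.f i q) (F.f i p) (F.f i q)
      rwa [Real.dist_eq] at this
    rw [E.sim, F.sim] at h1
    have h2 : dist (E.f i p) (F.f i p) ≤ δ₁ := by rw [dist_comm]; exact hDE i p hpX
    have h3 : dist (E.f i q) (F.f i q) ≤ δ₁ := by rw [dist_comm]; exact hDE i q hqX
    have h4 : |E.r i - F.r i| * dist p q ≤ 2 * δ₁ := by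
      calc |E.r i - F.r i| * dist p q = |(E.r i - F.r i) * dist p q| := by
            rw [abs_mul, abs_of_nonneg dist_nonneg]
        _ = |E.r i * dist p q - F.r i * dist p q| := by rw [sub_mul]
        _ ≤ dist (E.f i p) (F.f i p) + dist (E.f i q) (F.f i q) := h1
        _ ≤ 2 * δ₁ := by linarith
    rw [le_div_iff₀ hΔ]
    nlinarith [abs_nonneg (E.r i - F.r i)]
  have hGr := hratio G hDG
  have hHr := hratio H hDH
  have h2δΔ : 2*δ₁/Δ ≤ (1-c0)/2 := by rw [div_le_iff₀ hΔ]; linarith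
  have hGc : ∀ i, G.r i ≤ c := by
    intro i
    have h1 := (abs_le.1 (hGr i)).2
    have h2 : F.r i ≤ c0 := Finset.le_sup' F.r (Finset.mem_univ i)
    rw [hcdef]; linarith
  have hHc : ∀ i, H.r i ≤ c := by
    intro i
    have h1 := (abs_le.1 (hHr i)).2
    have h2 : F.r i ≤ c0 := Finset.le_sup' F.r (Finset.mem_univ i)
    rw [hcdef]; linarith
  -- weight closeness
  have hηΔ : 2*δ₁/Δ ≤ η := by rw [div_le_iff₀ hΔ]; linarith
  have hwG := ha G.r (fun i => le_trans (hGr i) hηΔ) sG hsG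
  have hwH := ha H.r (fun i => le_trans (hHr i) hηΔ) sH hsH
  -- the measures live on the attractors
  have hμGK : μG G.K = 1 := Aux15.muK_eq_one G hX hGc hcpos.le hc1 sG μG hμGinv
  have hμHK : μH H.K = 1 := Aux15.muK_eq_one H hX hHc hcpos.le hc1 sH μH hμHinv
  -- find y ∈ H.K close to x
  obtain ⟨y1, hy1K, hy1⟩ := Aux15.K_close G F hX hGc hFc hcpos.le hc1 hδ₁0.le
    (fun i z hz => by rw [dist_comm]; exact hDG i z hz) n hx
  obtain ⟨y, hyK, hy2⟩ := Aux15.K_close F H hX hFc hHc hcpos.le hc1 hδ₁0.le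
    (fun i z hz => hDH i z hz) n hy1K
  refine ⟨y, hyK, ?_⟩
  have hxy : dist x y ≤ 2 * (δ₁/(1-c) + c^n * DX) := by
    have := dist_triangle x y1 y
    linarith
  have hδρ : δ₁/(1-c) ≤ ρ/16 := by rw [div_le_iff₀ h1c]; linarith
  have hcn0 : (0:ℝ) ≤ c^n := pow_nonneg hcpos.le n
  -- weights and word sets
  set pG : (Fin n → Fin N) → ℝ := fun w => ∏ k, G.r (w k) ^ sG with hpGdef
  set pH : (Fin n → Fin N) → ℝ := fun w => ∏ k, H.r (w k) ^ sH with hpHdef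
  have hpG0 : ∀ w, 0 ≤ pG w :=
    fun w => Finset.prod_nonneg fun k _ => Real.rpow_nonneg (G.r_pos (w k)).le _
  have hpH0 : ∀ w, 0 ≤ pH w :=
    fun w => Finset.prod_nonneg fun k _ => Real.rpow_nonneg (H.r_pos (w k)).le _
  set SG : Finset (Fin n → Fin N) := Finset.univ.filter
    (fun w => ∀ k' ∈ G.K, wcomp G.f (List.ofFn w) k' ∈ ball x t) with hSGdef
  set SH : Finset (Fin n → Fin N) := Finset.univ.filter
    (fun w => ∃ k ∈ H.K, wcomp H.f (List.ofFn w) k ∈ ball y (t - ρ)) with hSHdef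
  -- SH ⊆ SG
  have hsub : SH ⊆ SG := by
    intro w hw
    rw [hSHdef, Finset.mem_filter] at hw
    obtain ⟨-, k, hkK, hkb⟩ := hw
    rw [hSGdef, Finset.mem_filter]
    refine ⟨Finset.mem_univ _, fun k' hk' => ?_⟩
    have hkX : k ∈ X := H.K_sub hkK
    have hk'X : k' ∈ X := G.K_sub hk'
    have t1 : dist (wcomp G.f (List.ofFn w) k') (wcomp G.f (List.ofFn w) k) ≤ c^n * DX := by
      have h5 := Aux15.wcomp_dist G hGc hcpos.le (List.ofFn w) k' k
      rw [List.length_ofFn] at h5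
      exact le_trans h5 (mul_le_mul_of_nonneg_left
        (dist_le_diam_of_mem hX.isBounded hk'X hkX) hcn0)
    have t2 : dist (wcomp G.f (List.ofFn w) k) (wcomp F.f (List.ofFn w) k) ≤ δ₁/(1-c) :=
      Aux15.wcomp_close G F hGc hcpos.le hc1 hδ₁0.le
        (fun i z hz => by rw [dist_comm]; exact hDG i z hz) _ hkX
    have t3 : dist (wcomp F.f (List.ofFn w) k) (wcomp H.f (List.ofFn w) k) ≤ δ₁/(1-c) :=
      Aux15.wcomp_close F H hFc hcpos.le hc1 hδ₁0.le (fun i z hz => hDH i z hz) _ hkX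
    have t4 : dist (wcomp H.f (List.ofFn w) k) y < t - ρ := mem_ball.1 hkb
    have t5 : dist (wcomp G.f (List.ofFn w) k') (wcomp H.f (List.ofFn w) k)
        ≤ dist (wcomp G.f (List.ofFn w) k') (wcomp G.f (List.ofFn w) k)
          + dist (wcomp G.f (List.ofFn w) k) (wcomp F.f (List.ofFn w) k)
          + dist (wcomp F.f (List.ofFn w) k) (wcomp H.f (List.ofFn w) k) :=
      dist_triangle4 _ _ _ _
    have t6 : dist (wcomp G.f (List.ofFn w) k') x
        ≤ dist (wcomp G.f (List.ofFn w) k') (wcomp H.f (List.ofFn w) k)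
          + dist (wcomp H.f (List.ofFn w) k) y + dist y x := dist_triangle4 _ _ _ _
    rw [mem_ball]
    have hyx : dist y x = dist x y := dist_comm y x
    linarith
  -- upper bound for μH of the ball
  have hμHKc : μH H.Kᶜ = 0 := by
    have h5 := measure_compl H.K_cpt.isClosed.measurableSet (measure_ne_top μH H.K)
    rw [hμHK, measure_univ] at h5
    simpa using h5
  have hup : μH (ball y (t-ρ)) ≤ ∑ w ∈ SH, ENNReal.ofReal (pH w) := by
    rw [Aux15.iter_inv H sH μH hμHinv n _ measurableSet_ball]
    have hzero : ∀ w ∈ Finset.univ, w ∉ SH →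
        ENNReal.ofReal (pH w) * μH ((wcomp H.f (List.ofFn w))⁻¹' ball y (t-ρ)) = 0 := by
      intro w _ hw
      have hsubK : (wcomp H.f (List.ofFn w))⁻¹' ball y (t-ρ) ⊆ H.Kᶜ := by
        intro z hz
        by_contra hzK
        rw [notMem_compl_iff] at hzK
        exact hw (Finset.mem_filter.2 ⟨Finset.mem_univ _, z, hzK, hz⟩)
      rw [measure_mono_null hsubK hμHKc, mul_zero]
    calc ∑ w : Fin n → Fin N,
        ENNReal.ofReal (pH w) * μH ((wcomp H.f (List.ofFn w))⁻¹' ball y (t-ρ))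
        = ∑ w ∈ SH, ENNReal.ofReal (pH w) * μH ((wcomp H.f (List.ofFn w))⁻¹' ball y (t-ρ)) :=
          (Finset.sum_subset (Finset.subset_univ SH) hzero).symm
      _ ≤ ∑ w ∈ SH, ENNReal.ofReal (pH w) := Finset.sum_le_sum fun w _ => by
          calc ENNReal.ofReal (pH w) * μH _ ≤ ENNReal.ofReal (pH w) * 1 :=
                mul_le_mul_right prob_le_one _
            _ = ENNReal.ofReal (pH w) := mul_one _
  -- lower bound for μG of the ball
  have hlow : ∑ w ∈ SG, ENNReal.ofReal (pG w) ≤ μG (ball x t) := by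
    rw [Aux15.iter_inv G sG μG hμGinv n _ measurableSet_ball]
    calc ∑ w ∈ SG, ENNReal.ofReal (pG w)
        = ∑ w ∈ SG, ENNReal.ofReal (pG w) * μG G.K := by
          refine Finset.sum_congr rfl fun w _ => ?_
          rw [hμGK, mul_one]
      _ ≤ ∑ w ∈ SG, ENNReal.ofReal (pG w) * μG ((wcomp G.f (List.ofFn w))⁻¹' ball x t) := by
          refine Finset.sum_le_sum fun w hw => mul_le_mul_right (measure_mono ?_) _
          intro k' hk'
          rw [hSGdef, Finset.mem_filter] at hw
          exact hw.2 k' hk'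
      _ ≤ ∑ w : Fin n → Fin N,
            ENNReal.ofReal (pG w) * μG ((wcomp G.f (List.ofFn w))⁻¹' ball x t) :=
          Finset.sum_le_sum_of_subset (Finset.subset_univ SG)
  -- comparison of the weights
  have hpdiff : ∀ w : Fin n → Fin N, pH w ≤ pG w + n * (2*γ₂) := by
    intro w
    have hcard : (Finset.univ : Finset (Fin n)).card = n := by simp
    have h5 := Aux15.prod_diff Finset.univ (fun k => H.r (w k) ^ sH)
      (fun k => G.r (w k) ^ sG) (2*γ₂) (by positivity)
      (fun k _ => ⟨Real.rpow_nonneg (H.r_pos (w k)).le _,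
        Real.rpow_le_one (H.r_pos (w k)).le (H.r_lt1 (w k)).le hwH.1⟩)
      (fun k _ => ⟨Real.rpow_nonneg (G.r_pos (w k)).le _,
        Real.rpow_le_one (G.r_pos (w k)).le (G.r_lt1 (w k)).le hwG.1⟩)
      (fun k _ => by
        have h6 := hwH.2 (w k)
        have h7 := hwG.2 (w k)
        have := abs_sub_abs_le_abs_sub (H.r (w k) ^ sH) (G.r (w k) ^ sG)
        calc |H.r (w k) ^ sH - G.r (w k) ^ sG|
            ≤ |H.r (w k) ^ sH - a (w k)| + |a (w k) - G.r (w k) ^ sG| := abs_sub_le _ _ _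
          _ ≤ γ₂ + γ₂ := by
              refine add_le_add h6 ?_
              rw [abs_sub_comm]
              exact h7
          _ = 2*γ₂ := by ring)
    rw [hcard] at h5
    have := (abs_le.1 h5).2
    rw [hpGdef, hpHdef]
    linarith [this]
  have hreal : ∑ w ∈ SH, pH w ≤ ∑ w ∈ SG, pG w + γ := by
    have hcardSH : (SH.card : ℝ) ≤ (N:ℝ)^n := by
      have h5 : SH.card ≤ Fintype.card (Fin n → Fin N) := Finset.card_le_univ SH
      have h6 : Fintype.card (Fin n → Fin N) = N^n := by simp
      rw [h6] at h5
      exact_mod_cast le_trans h5 (le_refl _)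
    calc ∑ w ∈ SH, pH w ≤ ∑ w ∈ SH, (pG w + n * (2*γ₂)) :=
          Finset.sum_le_sum fun w _ => hpdiff w
      _ = ∑ w ∈ SH, pG w + SH.card * (n * (2*γ₂)) := by
          rw [Finset.sum_add_distrib, Finset.sum_const, nsmul_eq_mul]
      _ ≤ ∑ w ∈ SG, pG w + (N:ℝ)^n * (n * (2*γ₂)) := by
          refine add_le_add (Finset.sum_le_sum_of_subset_of_nonneg hsub
            fun w _ _ => hpG0 w) ?_
          refine mul_le_mul_of_nonneg_right hcardSH (by positivity)
      _ ≤ ∑ w ∈ SG, pG w + γ := by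
          have hkey : (N:ℝ)^n * (n * (2*γ₂)) ≤ γ := by
            have h7 : γ = γ₂ * ((N:ℝ)^n * (2*n+1) + 1) := by
              rw [hγ₂def]
              field_simp
            rw [h7]
            nlinarith [hγ₂0, hNn0]
          linarith
  -- conclusion
  calc μH (ball y (t-ρ)) ≤ ∑ w ∈ SH, ENNReal.ofReal (pH w) := hup
    _ = ENNReal.ofReal (∑ w ∈ SH, pH w) :=
        (ENNReal.ofReal_sum_of_nonneg fun w _ => hpH0 w).symm
    _ ≤ ENNReal.ofReal (∑ w ∈ SG, pG w + γ) := ENNReal.ofReal_le_ofReal hreal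
    _ = ENNReal.ofReal (∑ w ∈ SG, pG w) + ENNReal.ofReal γ :=
        ENNReal.ofReal_add (Finset.sum_nonneg fun w _ => hpG0 w) hγ.le
    _ = ∑ w ∈ SG, ENNReal.ofReal (pG w) + ENNReal.ofReal γ := by
        rw [ENNReal.ofReal_sum_of_nonneg fun w _ => hpG0 w]
    _ ≤ μG (ball x t) + ENNReal.ofReal γ := add_le_add_left hlow _
end
end

section
/- Let Δ > 0, f ∈ M_Δ, κ > 0. Then there exists ρ with 0 < ρ < r_*(f)Δ/4 such that for all g, h ∈ M_Δ with D(f,g) ≤ ρ and D(f,h) ≤ ρ, and all r ∈ [r_*(g)Δ/2, Δ/2], one has (2(r−ρ))^{s(h)} ≥ (2r)^{s(g)} − κ. -/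
open Metric Set MeasureTheory ENNReal Filter

noncomputable section

set_option maxHeartbeats 1000000

private lemma sum_rpow_strictAnti' {N : ℕ} (hN : 0 < N) (r : Fin N → ℝ)
    (h0 : ∀ i, 0 < r i) (h1 : ∀ i, r i < 1) :
    StrictAnti (fun s : ℝ => ∑ i, r i ^ s) := by
  intro s u hsu
  apply Finset.sum_lt_sum_of_nonempty
  · exact Finset.univ_nonempty_iff.mpr (Fin.pos_iff_nonempty.mp hN)
  · exact fun i _ => Real.rpow_lt_rpow_of_exponent_gt (h0 i) (h1 i) hsu

private lemma s_lt_of_sum_lt' {N : ℕ} (hN : 0 < N) (r : Fin N → ℝ)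
    (h0 : ∀ i, 0 < r i) (h1 : ∀ i, r i < 1) {s u : ℝ}
    (hs : ∑ i, r i ^ s = 1) (hu : ∑ i, r i ^ u < 1) : s < u := by
  by_contra h
  push_neg at h
  have h2 := (sum_rpow_strictAnti' hN r h0 h1).antitone h
  rw [hs] at h2
  linarith

private lemma s_bounds' {N : ℕ} (hN : 2 ≤ N) (r : Fin N → ℝ) {b : ℝ}
    (hb0 : 0 < b) (hb1 : b < 1)
    (h0 : ∀ i, 0 < r i) (hhi : ∀ i, r i ≤ b) {s : ℝ}
    (hs : ∑ i, r i ^ s = 1) : 0 < s ∧ s ≤ Real.logb b (N : ℝ)⁻¹ := by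
  have hNR : (2:ℝ) ≤ (N:ℝ) := by exact_mod_cast hN
  have hN0 : (0:ℝ) < N := by linarith
  have hspos : 0 < s := by
    by_contra hle
    push_neg at hle
    have hone : ∀ i, (1:ℝ) ≤ r i ^ s := by
      intro i
      have hle1 : r i ≤ 1 := le_of_lt (lt_of_le_of_lt (hhi i) hb1)
      have := Real.rpow_le_rpow_of_exponent_ge (h0 i) hle1 hle
      rwa [Real.rpow_zero] at this
    have hge : (N:ℝ) ≤ ∑ i, r i ^ s := by
      have h := Finset.card_nsmul_le_sum Finset.univ (fun i => r i ^ s) 1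
        (fun i _ => hone i)
      simpa using h
    rw [hs] at hge
    linarith
  refine ⟨hspos, ?_⟩
  have hub : (1:ℝ) ≤ (N:ℝ) * b ^ s := by
    calc (1:ℝ) = ∑ i, r i ^ s := hs.symm
      _ ≤ ∑ _i : Fin N, b ^ s :=
          Finset.sum_le_sum (fun i _ => Real.rpow_le_rpow (h0 i).le (hhi i) hspos.le)
      _ = (N:ℝ) * b ^ s := by
          simp [Finset.sum_const, nsmul_eq_mul]
  have hbS : b ^ (Real.logb b (N:ℝ)⁻¹) = (N:ℝ)⁻¹ :=
    Real.rpow_logb hb0 (ne_of_lt hb1) (by positivity)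
  by_contra hgt
  push_neg at hgt
  have hlt : b ^ s < b ^ (Real.logb b (N:ℝ)⁻¹) :=
    (Real.rpow_lt_rpow_left_iff_of_base_lt_one hb0 hb1).mpr hgt
  rw [hbS] at hlt
  have h2 : (N:ℝ) * b ^ s < (N:ℝ) * (N:ℝ)⁻¹ := mul_lt_mul_of_pos_left hlt hN0
  rw [mul_inv_cancel₀ (ne_of_gt hN0)] at h2
  linarith

/-- Lemma 3.3: for `f ∈ M_Δ` and `κ > 0` there is
`0 < ρ < r_*(f)Δ/4` such that for `g, h ∈ M_Δ` with `D(f,g) ≤ ρ`, `D(f,h) ≤ ρ`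
and `r ∈ [r_*(g)Δ/2, Δ/2]`, one has `(2(r−ρ))^{s(h)} ≥ (2r)^{s(g)} − κ`. -/
theorem stmt16
    {d N : ℕ} (hN : 2 ≤ N) (X : Set (Euc d)) (hX : IsCompact X)
    (Δ : ℝ) (hΔ : 0 < Δ)
    (F : IFS d N X) (hF : sep Δ F)
    (rF : ℝ) (hrF : IsLeast (Set.range F.r) rF)
    (κ : ℝ) (hκ : 0 < κ) :
    ∃ ρ : ℝ, 0 < ρ ∧ ρ < rF * Δ / 4 ∧
      ∀ G H : IFS d N X, sep Δ G → sep Δ H → Dle F G ρ → Dle F H ρ →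
      ∀ sG sH : ℝ, (∑ i, G.r i ^ sG = 1) → (∑ i, H.r i ^ sH = 1) →
      ∀ rG : ℝ, IsLeast (Set.range G.r) rG →
      ∀ t ∈ Set.Icc (rG * Δ / 2) (Δ / 2),
        (2 * t) ^ sG - κ ≤ (2 * (t - ρ)) ^ sH := by
  classical
  obtain ⟨hrFmem, hrFlb⟩ := hrF
  obtain ⟨iF, hiF⟩ := hrFmem
  have ha0 : 0 < rF := hiF ▸ F.r_pos iF
  have ha1 : rF < 1 := hiF ▸ F.r_lt1 iF
  have hrFle : ∀ i, rF ≤ F.r i := fun i => hrFlb ⟨i, rfl⟩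
  have hNpos : 0 < N := by omega
  have hFinNe : (Finset.univ : Finset (Fin N)).Nonempty :=
    Finset.univ_nonempty_iff.mpr (Fin.pos_iff_nonempty.mp hNpos)
  set m := Finset.univ.sup' hFinNe F.r with hmdef
  have hm1 : m < 1 := by
    rw [hmdef, Finset.sup'_lt_iff]
    exact fun i _ => F.r_lt1 i
  have hrm : ∀ i, F.r i ≤ m := fun i => Finset.le_sup' F.r (Finset.mem_univ i)
  have hm0 : 0 < m := lt_of_lt_of_le (F.r_pos iF) (hrm iF)
  set b := (1 + m) / 2 with hbdef
  have hb0 : 0 < b := by rw [hbdef]; linarith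
  have hb1 : b < 1 := by rw [hbdef]; linarith
  set S := Real.logb b (N : ℝ)⁻¹ with hSdef
  have hNR : (2:ℝ) ≤ (N:ℝ) := by exact_mod_cast hN
  have hS0 : 0 < S := by
    have h1 : b ^ S = (N:ℝ)⁻¹ := Real.rpow_logb hb0 (ne_of_lt hb1) (by positivity)
    have h2 : b ^ S < b ^ (0:ℝ) := by
      rw [h1, Real.rpow_zero]
      rw [inv_lt_one_iff₀]
      right; linarith
    exact (Real.rpow_lt_rpow_left_iff_of_base_lt_one hb0 hb1).mp h2
  set c := rF * Δ / 4 with hcdef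
  have hc0 : 0 < c := by rw [hcdef]; positivity
  set M := (max 1 Δ) ^ S with hMdef
  have hM1 : (1:ℝ) ≤ M := Real.one_le_rpow (le_max_left 1 Δ) hS0.le
  have hM0 : (0:ℝ) ≤ M := by linarith
  set L := max 2 (max Δ c⁻¹) with hLdef
  have hL1 : (1:ℝ) < L := lt_of_lt_of_le one_lt_two (le_max_left _ _)
  have hL0 : (0:ℝ) < L := lt_trans one_pos hL1
  -- choose ε
  obtain ⟨ε, hε0, hε1⟩ : ∃ ε : ℝ, 0 < ε ∧ M * (L ^ ε - 1) < κ / 2 := by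
    have hc' : ContinuousAt (fun x : ℝ => L ^ x) 0 :=
      Real.continuousAt_const_rpow (ne_of_gt hL0)
    have h1 : Tendsto (fun ε : ℝ => M * (L ^ ε - 1)) (nhdsWithin 0 (Set.Ioi 0))
        (nhds (M * (L ^ (0:ℝ) - 1))) :=
      ((hc'.tendsto.sub_const 1).const_mul M).mono_left nhdsWithin_le_nhds
    have h2 : ∀ᶠ ε in nhdsWithin (0:ℝ) (Set.Ioi 0), M * (L ^ ε - 1) < κ / 2 := by
      refine h1.eventually_lt_const ?_
      rw [Real.rpow_zero]
      simp only [sub_self, mul_zero]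
      linarith
    obtain ⟨ε, hε2, hε3⟩ := (h2.and eventually_mem_nhdsWithin).exists
    exact ⟨ε, hε3, hε2⟩
  -- choose ρ
  have hrpow1 : ContinuousAt (fun x : ℝ => x ^ S) 1 :=
    Real.continuousAt_rpow_const 1 S (Or.inl one_ne_zero)
  have hsmall1 : ∀ᶠ ρ in nhdsWithin (0:ℝ) (Set.Ioi 0), ρ < rF * Δ / 8 :=
    Filter.eventually_of_mem
      (Ioo_mem_nhdsGT_of_mem ⟨le_refl 0, by positivity⟩) (fun x hx => hx.2)
  have hsmall2 : ∀ᶠ ρ in nhdsWithin (0:ℝ) (Set.Ioi 0), ρ < Δ * (1 - m) / 8 :=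
    Filter.eventually_of_mem
      (Ioo_mem_nhdsGT_of_mem ⟨le_refl 0, by
        have h := mul_pos hΔ (show (0:ℝ) < 1 - m by linarith)
        linarith⟩) (fun x hx => hx.2)
  have hcP4 : ∀ᶠ ρ in nhdsWithin (0:ℝ) (Set.Ioi 0),
      b ^ ε * (1 + 8 * ρ / (rF * Δ)) ^ S < 1 := by
    have haff : Tendsto (fun ρ : ℝ => 1 + 8 * ρ / (rF * Δ))
        (nhdsWithin (0:ℝ) (Set.Ioi 0)) (nhds 1) := by
      have hcont : Continuous (fun ρ : ℝ => 1 + 8 * ρ / (rF * Δ)) :=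
        continuous_const.add ((continuous_const.mul continuous_id).div_const _)
      have h := (hcont.tendsto 0).mono_left
        (nhdsWithin_le_nhds : nhdsWithin (0:ℝ) (Set.Ioi 0) ≤ nhds 0)
      simpa using h
    have h1 : Tendsto (fun ρ : ℝ => b ^ ε * (1 + 8 * ρ / (rF * Δ)) ^ S)
        (nhdsWithin (0:ℝ) (Set.Ioi 0)) (nhds (b ^ ε * (1:ℝ) ^ S)) :=
      (hrpow1.tendsto.comp haff).const_mul _
    refine h1.eventually_lt_const ?_
    rw [Real.one_rpow, mul_one]
    exact Real.rpow_lt_one hb0.le hb1 hε0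
  have hcP5 : ∀ᶠ ρ in nhdsWithin (0:ℝ) (Set.Ioi 0),
      M * ((1 + 2 * ρ / c) ^ S - 1) < κ / 2 := by
    have haff2 : Tendsto (fun ρ : ℝ => 1 + 2 * ρ / c)
        (nhdsWithin (0:ℝ) (Set.Ioi 0)) (nhds 1) := by
      have hcont : Continuous (fun ρ : ℝ => 1 + 2 * ρ / c) :=
        continuous_const.add ((continuous_const.mul continuous_id).div_const _)
      have h := (hcont.tendsto 0).mono_left
        (nhdsWithin_le_nhds : nhdsWithin (0:ℝ) (Set.Ioi 0) ≤ nhds 0)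
      simpa using h
    have h1 : Tendsto (fun ρ : ℝ => M * ((1 + 2 * ρ / c) ^ S - 1))
        (nhdsWithin (0:ℝ) (Set.Ioi 0)) (nhds (M * ((1:ℝ) ^ S - 1))) :=
      ((hrpow1.tendsto.comp haff2).sub_const 1).const_mul _
    refine h1.eventually_lt_const ?_
    rw [Real.one_rpow]
    simp only [sub_self, mul_zero]
    linarith
  obtain ⟨ρ, ⟨⟨⟨hρ8, hρm⟩, hP4⟩, hP5⟩, hρ0⟩ :=
    ((((hsmall1.and hsmall2).and hcP4).and hcP5).and eventually_mem_nhdsWithin).exists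
  have hρ0 : 0 < ρ := hρ0
  refine ⟨ρ, hρ0, by rw [hcdef] at hc0 ⊢; linarith, ?_⟩
  intro G H hsepG hsepH hDG hDH sG sH hsG hsH rG hrG t ht
  -- two points of K at distance > Δ
  obtain ⟨k, hk⟩ := F.K_ne
  have hsub : ∀ i : Fin N, F.f i '' F.K ⊆ F.K := by
    intro i x hx
    rw [F.K_inv]
    exact Set.mem_iUnion.mpr ⟨i, hx⟩
  have hne01 : (⟨0, by omega⟩ : Fin N) ≠ ⟨1, by omega⟩ := by
    intro h
    have := congrArg Fin.val h
    simp at this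
  set p := F.f ⟨0, by omega⟩ k with hpdef
  set q := F.f ⟨1, by omega⟩ k with hqdef
  have hpmem : p ∈ F.f ⟨0, by omega⟩ '' F.K := ⟨k, hk, rfl⟩
  have hqmem : q ∈ F.f ⟨1, by omega⟩ '' F.K := ⟨k, hk, rfl⟩
  have hΔpq : Δ < dist p q := hF _ _ hne01 p hpmem q hqmem
  have hpX : p ∈ X := F.K_sub (hsub _ hpmem)
  have hqX : q ∈ X := F.K_sub (hsub _ hqmem)
  -- closeness of ratios
  have hclose : ∀ (G : IFS d N X), Dle F G ρ → ∀ i, |G.r i - F.r i| ≤ 2 * ρ / Δ := by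
    intro G hD i
    have h1 : dist (F.f i p) (F.f i q) = F.r i * dist p q := F.sim i p q
    have h2 : dist (G.f i p) (G.f i q) = G.r i * dist p q := G.sim i p q
    have h3 := dist_dist_dist_le (G.f i p) (G.f i q) (F.f i p) (F.f i q)
    rw [h1, h2, Real.dist_eq] at h3
    have h4 : dist (G.f i p) (F.f i p) ≤ ρ := by
      rw [dist_comm]; exact hD i p hpX
    have h5 : dist (G.f i q) (F.f i q) ≤ ρ := by
      rw [dist_comm]; exact hD i q hqX
    have h6 : |G.r i - F.r i| * dist p q ≤ 2 * ρ := by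
      have heq : G.r i * dist p q - F.r i * dist p q = (G.r i - F.r i) * dist p q := by
        ring
      rw [heq, abs_mul, abs_of_nonneg dist_nonneg] at h3
      linarith
    rw [le_div_iff₀ hΔ]
    calc |G.r i - F.r i| * Δ ≤ |G.r i - F.r i| * dist p q :=
          mul_le_mul_of_nonneg_left hΔpq.le (abs_nonneg _)
      _ ≤ 2 * ρ := h6
  have hη1 : 2 * ρ / Δ < rF / 4 := by
    rw [div_lt_div_iff₀ hΔ (by norm_num : (0:ℝ) < 4)]
    linarith
  have hη2 : 2 * ρ / Δ ≤ (1 - m) / 2 := by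
    rw [div_le_div_iff₀ hΔ (by norm_num : (0:ℝ) < 2)]
    linarith
  have hbounds : ∀ (G : IFS d N X), Dle F G ρ → ∀ i, rF / 2 ≤ G.r i ∧ G.r i ≤ b := by
    intro G hD i
    obtain ⟨hl, hr⟩ := abs_le.mp (hclose G hD i)
    constructor
    · have := hrFle i; linarith
    · have := hrm i; rw [hbdef]; linarith
  -- cross comparison of dimensions
  have hcross : ∀ (G H : IFS d N X), Dle F G ρ → Dle F H ρ →
      ∀ sG : ℝ, (∑ i, G.r i ^ sG = 1) → ∀ sH : ℝ, (∑ i, H.r i ^ sH = 1) →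
      sH < sG + ε := by
    intro G H hDG hDH sG hsG sH hsH
    obtain ⟨hsG0, hsGS⟩ := s_bounds' hN G.r hb0 hb1 G.r_pos
      (fun i => (hbounds G hDG i).2) hsG
    set w := 1 + 8 * ρ / (rF * Δ) with hwdef
    have hw1 : (1:ℝ) ≤ w := by
      rw [hwdef]
      have : (0:ℝ) ≤ 8 * ρ / (rF * Δ) := by positivity
      linarith
    have hterm : ∀ i, H.r i ^ (sG + ε) ≤ G.r i ^ sG * (w ^ S * b ^ ε) := by
      intro i
      have hH0 : (0:ℝ) ≤ H.r i := (H.r_pos i).le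
      have hHb : H.r i ≤ b := (hbounds H hDH i).2
      have hHle : H.r i ≤ G.r i * w := by
        obtain ⟨e1l, e1r⟩ := abs_le.mp (hclose G hDG i)
        obtain ⟨e2l, e2r⟩ := abs_le.mp (hclose H hDH i)
        have e3 : rF / 2 ≤ G.r i := (hbounds G hDG i).1
        have hq : rF / 2 * (8 * ρ / (rF * Δ)) = 4 * ρ / Δ := by
          field_simp
          ring
        have h8 : (0:ℝ) ≤ 8 * ρ / (rF * Δ) := by positivity
        have h9 := mul_le_mul_of_nonneg_right e3 h8
        rw [hq] at h9
        have h10 : H.r i ≤ G.r i + 4 * ρ / Δ := by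
          have hd : 4 * ρ / Δ = 2 * ρ / Δ + 2 * ρ / Δ := by ring
          rw [hd]; linarith
        rw [hwdef]
        have hgw : G.r i * (1 + 8 * ρ / (rF * Δ))
            = G.r i + G.r i * (8 * ρ / (rF * Δ)) := by ring
        rw [hgw]
        linarith
      calc H.r i ^ (sG + ε) = H.r i ^ sG * H.r i ^ ε := Real.rpow_add (H.r_pos i) _ _
        _ ≤ (G.r i * w) ^ sG * b ^ ε := by
            apply mul_le_mul (Real.rpow_le_rpow hH0 hHle hsG0.le)
              (Real.rpow_le_rpow hH0 hHb hε0.le) (Real.rpow_nonneg hH0 _)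
              (Real.rpow_nonneg (mul_nonneg (G.r_pos i).le (by linarith)) _)
        _ = G.r i ^ sG * w ^ sG * b ^ ε := by
            rw [Real.mul_rpow (G.r_pos i).le (by linarith)]
        _ ≤ G.r i ^ sG * w ^ S * b ^ ε := by
            have hww : w ^ sG ≤ w ^ S := Real.rpow_le_rpow_of_exponent_le hw1 hsGS
            have hg0 : (0:ℝ) ≤ G.r i ^ sG := Real.rpow_nonneg (G.r_pos i).le _
            have hbe : (0:ℝ) ≤ b ^ ε := Real.rpow_nonneg hb0.le _
            exact mul_le_mul_of_nonneg_right (mul_le_mul_of_nonneg_left hww hg0) hbe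
        _ = G.r i ^ sG * (w ^ S * b ^ ε) := by ring
    have hsum : ∑ i, H.r i ^ (sG + ε) < 1 := by
      calc ∑ i, H.r i ^ (sG + ε) ≤ ∑ i, G.r i ^ sG * (w ^ S * b ^ ε) :=
            Finset.sum_le_sum (fun i _ => hterm i)
        _ = (∑ i, G.r i ^ sG) * (w ^ S * b ^ ε) := by rw [← Finset.sum_mul]
        _ = w ^ S * b ^ ε := by rw [hsG, one_mul]
        _ < 1 := by rw [mul_comm]; exact hP4
    exact s_lt_of_sum_lt' hNpos H.r H.r_pos
      (fun i => lt_of_le_of_lt (hbounds H hDH i).2 hb1) hsH hsum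
  have hs1 : sH < sG + ε := hcross G H hDG hDH sG hsG sH hsH
  have hs2 : sG < sH + ε := hcross H G hDH hDG sH hsH sG hsG
  obtain ⟨hsG0, hsGS⟩ := s_bounds' hN G.r hb0 hb1 G.r_pos
    (fun i => (hbounds G hDG i).2) hsG
  obtain ⟨hsH0, hsHS⟩ := s_bounds' hN H.r hb0 hb1 H.r_pos
    (fun i => (hbounds H hDH i).2) hsH
  -- geometric bounds on t
  obtain ⟨hrGmem, _⟩ := hrG
  obtain ⟨iG, hiG⟩ := hrGmem
  have hrG2 : rF / 2 ≤ rG := hiG ▸ (hbounds G hDG iG).1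
  obtain ⟨ht1, ht2⟩ := ht
  have hct : c ≤ t := by
    rw [hcdef]
    have h := mul_le_mul_of_nonneg_right hrG2 hΔ.le
    linarith
  have hxΔ : 2 * t ≤ Δ := by linarith
  have hρc : ρ < c / 2 := by rw [hcdef]; linarith
  have hcy : c ≤ 2 * (t - ρ) := by linarith
  have hy0 : (0:ℝ) < 2 * (t - ρ) := lt_of_lt_of_le hc0 hcy
  have hx0 : (0:ℝ) < 2 * t := by linarith
  have hyx : 2 * (t - ρ) ≤ 2 * t := by linarith
  have hxL : 2 * t ≤ L := by
    rw [hLdef]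
    exact le_trans hxΔ (le_trans (le_max_left Δ c⁻¹) (le_max_right 2 _))
  -- term 1
  have hxsH : (2 * t) ^ sH ≤ M := by
    rw [hMdef]
    calc (2 * t) ^ sH ≤ (max 1 Δ) ^ sH :=
          Real.rpow_le_rpow hx0.le (le_trans hxΔ (le_max_right 1 Δ)) hsH0.le
      _ ≤ (max 1 Δ) ^ S := Real.rpow_le_rpow_of_exponent_le (le_max_left 1 Δ) hsHS
  have hdecomp : (2 * t) ^ sG = (2 * t) ^ sH * (2 * t) ^ (sG - sH) := by
    rw [← Real.rpow_add hx0]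
    congr 1
    ring
  have hterm1 : (2 * t) ^ sG - (2 * t) ^ sH ≤ κ / 2 := by
    have hxu : (2 * t) ^ (sG - sH) ≤ L ^ ε := by
      rcases le_or_gt 0 (sG - sH) with hu | hu
      · calc (2 * t) ^ (sG - sH) ≤ L ^ (sG - sH) :=
              Real.rpow_le_rpow hx0.le hxL hu
          _ ≤ L ^ ε := Real.rpow_le_rpow_of_exponent_le hL1.le (by linarith)
      · have h1 : (2 * t) ^ (sG - sH) = ((2 * t)⁻¹) ^ (sH - sG) := by
          rw [Real.inv_rpow hx0.le, ← Real.rpow_neg hx0.le]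
          congr 1
          ring
        rw [h1]
        have hinv : (2 * t)⁻¹ ≤ L := by
          have hcle : (2 * t)⁻¹ ≤ c⁻¹ := by
            apply inv_anti₀ hc0
            linarith
          rw [hLdef]
          exact le_trans hcle (le_trans (le_max_right Δ c⁻¹) (le_max_right 2 _))
        calc ((2 * t)⁻¹) ^ (sH - sG) ≤ L ^ (sH - sG) :=
              Real.rpow_le_rpow (by positivity) hinv (by linarith)
          _ ≤ L ^ ε := Real.rpow_le_rpow_of_exponent_le hL1.le (by linarith)
    have hA : (0:ℝ) ≤ (2 * t) ^ sH := Real.rpow_nonneg hx0.le _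
    rcases le_or_gt ((2 * t) ^ (sG - sH)) 1 with h | h
    · have hle : (2 * t) ^ sG ≤ (2 * t) ^ sH := by
        rw [hdecomp]
        exact mul_le_of_le_one_right hA h
      linarith
    · have hmul : (2 * t) ^ sH * ((2 * t) ^ (sG - sH) - 1) ≤ M * (L ^ ε - 1) :=
        mul_le_mul hxsH (by linarith) (by linarith) hM0
      have heq : (2 * t) ^ sG - (2 * t) ^ sH
          = (2 * t) ^ sH * ((2 * t) ^ (sG - sH) - 1) := by
        rw [hdecomp]; ring
      linarith
  -- term 2
  have hterm2 : (2 * t) ^ sH - (2 * (t - ρ)) ^ sH ≤ κ / 2 := by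
    have hdecomp2 : (2 * t) ^ sH
        = (2 * (t - ρ)) ^ sH * ((2 * t) / (2 * (t - ρ))) ^ sH := by
      rw [← Real.mul_rpow hy0.le (by positivity)]
      congr 1
      field_simp
      exact (mul_div_cancel_right₀ t (ne_of_gt (by linarith : (0:ℝ) < t - ρ))).symm
    have hratio : (2 * t) / (2 * (t - ρ)) ≤ 1 + 2 * ρ / c := by
      rw [div_le_iff₀ hy0]
      have h1 : 2 * ρ / c * c = 2 * ρ := div_mul_cancel₀ _ (ne_of_gt hc0)
      have h2 : 2 * ρ / c * c ≤ 2 * ρ / c * (2 * (t - ρ)) :=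
        mul_le_mul_of_nonneg_left hcy (by positivity)
      have hexp : (1 + 2 * ρ / c) * (2 * (t - ρ))
          = 2 * (t - ρ) + 2 * ρ / c * (2 * (t - ρ)) := by ring
      rw [hexp]
      linarith
    have hr1 : (1:ℝ) ≤ (2 * t) / (2 * (t - ρ)) := (one_le_div hy0).mpr hyx
    have hw1' : (1:ℝ) ≤ 1 + 2 * ρ / c := by
      have : (0:ℝ) ≤ 2 * ρ / c := by positivity
      linarith
    have hratioS : ((2 * t) / (2 * (t - ρ))) ^ sH ≤ (1 + 2 * ρ / c) ^ S :=
      calc ((2 * t) / (2 * (t - ρ))) ^ sH ≤ (1 + 2 * ρ / c) ^ sH :=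
            Real.rpow_le_rpow (by positivity) hratio hsH0.le
        _ ≤ (1 + 2 * ρ / c) ^ S := Real.rpow_le_rpow_of_exponent_le hw1' hsHS
    have hysH : (2 * (t - ρ)) ^ sH ≤ M := by
      rw [hMdef]
      calc (2 * (t - ρ)) ^ sH ≤ (max 1 Δ) ^ sH :=
            Real.rpow_le_rpow hy0.le
              (le_trans (le_trans hyx hxΔ) (le_max_right 1 Δ)) hsH0.le
        _ ≤ (max 1 Δ) ^ S := Real.rpow_le_rpow_of_exponent_le (le_max_left 1 Δ) hsHS
    have h1r : (1:ℝ) ≤ ((2 * t) / (2 * (t - ρ))) ^ sH := Real.one_le_rpow hr1 hsH0.le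
    have hmul : (2 * (t - ρ)) ^ sH * (((2 * t) / (2 * (t - ρ))) ^ sH - 1)
        ≤ M * ((1 + 2 * ρ / c) ^ S - 1) :=
      mul_le_mul hysH (by linarith) (by linarith) hM0
    have heq2 : (2 * t) ^ sH - (2 * (t - ρ)) ^ sH
        = (2 * (t - ρ)) ^ sH * (((2 * t) / (2 * (t - ρ))) ^ sH - 1) := by
      rw [hdecomp2]; ring
    linarith
  linarith
end
end

section
/- The map f ↦ λ(f), assigning to each IFS f ∈ M_Δ its normalized self-similar measure, is continuous from M_Δ into the space of Borel probability measures on X equipped with the weak topology. -/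
open Metric Set MeasureTheory ENNReal Filter

noncomputable section

namespace S17

/-- one-sided base perturbation for rpow -/
lemma rpow_base_key {m' S x y s : ℝ} (hm' : 0 < m') (hx : m' ≤ x) (hx1 : x ≤ 1)
    (hy1 : y ≤ 1) (hxy : x ≤ y) (hd : y - x ≤ m') (hs0 : 0 ≤ s) (hsS : s ≤ S) :
    y ^ s - x ^ s ≤ S * Real.exp S / m' * (y - x) := by
  have hx0 : 0 < x := lt_of_lt_of_le hm' hx
  set u : ℝ := (y - x) / x with hu_def
  have hu0 : 0 ≤ u := div_nonneg (by linarith) hx0.le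
  have hu1 : u ≤ 1 := by
    rw [div_le_one hx0]; linarith
  have hyx : y = x * (1 + u) := by
    rw [hu_def, mul_add, mul_one, ← mul_div_assoc, mul_div_cancel_left₀ _ hx0.ne']; ring
  have h1 : y ^ s = x ^ s * (1 + u) ^ s := by
    rw [hyx, Real.mul_rpow hx0.le (by linarith)]
  have hxs1 : x ^ s ≤ 1 := Real.rpow_le_one hx0.le hx1 hs0
  have hxs0 : 0 ≤ x ^ s := Real.rpow_nonneg hx0.le s
  have h2 : (1 + u) ^ s ≤ Real.exp (u * s) := by
    calc (1 + u) ^ s ≤ (Real.exp u) ^ s := by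
          apply Real.rpow_le_rpow (by linarith) (by linarith [Real.add_one_le_exp u]) hs0
      _ = Real.exp (u * s) := by rw [← Real.exp_mul]
  have h3 : Real.exp (u * s) - 1 ≤ u * s * Real.exp (u * s) := by
    have ha : 1 - u * s ≤ Real.exp (-(u * s)) := by linarith [Real.add_one_le_exp (-(u * s))]
    have hb : Real.exp (-(u * s)) * Real.exp (u * s) = 1 := by
      rw [← Real.exp_add]; simp
    nlinarith [Real.exp_pos (u * s)]
  have hus : u * s ≤ S := by
    calc u * s ≤ 1 * S := mul_le_mul hu1 hsS hs0 zero_le_one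
      _ = S := one_mul S
  have h4 : u * s * Real.exp (u * s) ≤ u * S * Real.exp S := by
    have := Real.exp_le_exp.2 hus
    have hS0 : 0 ≤ S := le_trans (mul_nonneg hu0 hs0) hus
    nlinarith [Real.exp_pos (u * s), mul_nonneg hu0 hs0, Real.exp_pos S,
      mul_le_mul_of_nonneg_left hsS hu0]
  have h5 : u * S * Real.exp S ≤ S * Real.exp S / m' * (y - x) := by
    have hS0 : 0 ≤ S := le_trans (mul_nonneg hu0 hs0) hus
    have : u ≤ (y - x) / m' := by
      apply div_le_div_of_nonneg_left (by linarith) hm' hx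
    calc u * S * Real.exp S ≤ (y - x) / m' * S * Real.exp S :=
          mul_le_mul_of_nonneg_right (mul_le_mul_of_nonneg_right this hS0) (Real.exp_pos S).le
      _ = S * Real.exp S / m' * (y - x) := by ring
  have h6 : y ^ s - x ^ s ≤ (1 + u) ^ s - 1 := by
    have h1u : (1:ℝ) ≤ (1 + u) ^ s := by
      calc (1:ℝ) = 1 ^ s := (Real.one_rpow s).symm
        _ ≤ (1 + u) ^ s := Real.rpow_le_rpow zero_le_one (by linarith) hs0
    calc y ^ s - x ^ s = x ^ s * ((1 + u) ^ s - 1) := by rw [h1]; ring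
      _ ≤ 1 * ((1 + u) ^ s - 1) := mul_le_mul_of_nonneg_right hxs1 (by linarith)
      _ = (1 + u) ^ s - 1 := one_mul _
  linarith

/-- base perturbation, absolute values -/
lemma rpow_base_diff {m' S x y s : ℝ} (hm' : 0 < m') (hx : m' ≤ x) (hx1 : x ≤ 1)
    (hy : m' ≤ y) (hy1 : y ≤ 1) (hxy : |x - y| ≤ m') (hs0 : 0 ≤ s) (hsS : s ≤ S) :
    |x ^ s - y ^ s| ≤ S * Real.exp S / m' * |x - y| := by
  rcases le_total x y with h | h
  · have h1 : y ^ s - x ^ s ≤ S * Real.exp S / m' * (y - x) :=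
      rpow_base_key hm' hx hx1 hy1 h (by rw [abs_sub_comm] at hxy; rwa [abs_of_nonneg (by linarith)] at hxy) hs0 hsS
    have h2 : x ^ s ≤ y ^ s := Real.rpow_le_rpow (by linarith) h hs0
    rw [abs_of_nonpos (by linarith), abs_of_nonpos (by linarith)]
    linarith
  · have h1 : x ^ s - y ^ s ≤ S * Real.exp S / m' * (x - y) :=
      rpow_base_key hm' hy hy1 hx1 h (by rwa [abs_of_nonneg (by linarith)] at hxy) hs0 hsS
    have h2 : y ^ s ≤ x ^ s := Real.rpow_le_rpow (by linarith) h hs0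
    rw [abs_of_nonneg (by linarith), abs_of_nonneg (by linarith)]
    linarith

/-- exponent perturbation -/
lemma rpow_exp_diff {x s t : ℝ} (hx0 : 0 < x) (hx1 : x ≤ 1) (hs : 0 ≤ s) (ht : 0 ≤ t) :
    |x ^ s - x ^ t| ≤ |s - t| * (-Real.log x) := by
  have hlog : Real.log x ≤ 0 := Real.log_nonpos hx0.le hx1
  have key : ∀ a b : ℝ, 0 ≤ a → a ≤ b → x ^ a - x ^ b ≤ (b - a) * (-Real.log x) := by
    intro a b ha hab
    have h1 : x ^ (b - a) = Real.exp (Real.log x * (b - a)) := by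
      rw [Real.rpow_def_of_pos hx0]
    have h2 : 1 + Real.log x * (b - a) ≤ x ^ (b - a) := by
      rw [h1]; linarith [Real.add_one_le_exp (Real.log x * (b - a))]
    have h3 : x ^ b = x ^ a * x ^ (b - a) := by
      rw [← Real.rpow_add hx0]; ring_nf
    have hxa1 : x ^ a ≤ 1 := Real.rpow_le_one hx0.le hx1 ha
    have hxa0 : 0 ≤ x ^ a := Real.rpow_nonneg hx0.le a
    have h4 : 1 - x ^ (b - a) ≤ (b - a) * (-Real.log x) := by nlinarith
    have h5 : 0 ≤ 1 - x ^ (b - a) := by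
      have : x ^ (b - a) ≤ 1 := Real.rpow_le_one hx0.le hx1 (by linarith)
      linarith
    calc x ^ a - x ^ b = x ^ a * (1 - x ^ (b - a)) := by rw [h3]; ring
      _ ≤ 1 * (1 - x ^ (b - a)) := mul_le_mul_of_nonneg_right hxa1 h5
      _ = 1 - x ^ (b - a) := one_mul _
      _ ≤ (b - a) * (-Real.log x) := h4
  rcases le_total s t with h | h
  · have h1 := key s t hs h
    have h2 : x ^ t ≤ x ^ s := Real.rpow_le_rpow_of_exponent_ge hx0 hx1 h
    rw [abs_of_nonneg (by linarith), abs_of_nonpos (by linarith)]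
    linarith
  · have h1 := key t s ht h
    have h2 : x ^ s ≤ x ^ t := Real.rpow_le_rpow_of_exponent_ge hx0 hx1 h
    rw [abs_of_nonpos (by linarith), abs_of_nonneg (by linarith)]
    linarith

/-- lower bound for 1 - x^u -/
lemma one_sub_rpow_lower {x u : ℝ} (hx0 : 0 < x) (hx1 : x ≤ 1) (hu : 0 ≤ u) :
    (1 - x) * min u 1 ≤ 1 - x ^ u := by
  rcases le_total 1 u with h | h
  · rw [min_eq_right h]
    have : x ^ u ≤ x ^ (1:ℝ) := Real.rpow_le_rpow_of_exponent_ge hx0 hx1 h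
    rw [Real.rpow_one] at this
    linarith
  · rw [min_eq_left h]
    have := Real.geom_mean_le_arith_mean2_weighted hu (by linarith : (0:ℝ) ≤ 1 - u)
      hx0.le zero_le_one (by ring)
    rw [Real.one_rpow, mul_one] at this
    nlinarith



variable {d N : ℕ}

lemma cont_of_sim {f : Euc d → Euc d} {r : ℝ} (hr : 0 ≤ r)
    (h : ∀ x y, dist (f x) (f y) = r * dist x y) : Continuous f := by
  refine (LipschitzWith.of_dist_le_mul (K := r.toNNReal) (f := f) ?_).continuous
  intro x y
  rw [h, Real.coe_toNNReal r hr]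

/-- iterated transfer-operator approximation -/
def iterA (c : Fin N → ℝ) (h : Fin N → Euc d → Euc d) (φ0 : Euc d → ℝ) : ℕ → Euc d → ℝ
  | 0 => φ0
  | k+1 => fun x => ∑ i, c i * iterA c h φ0 k (h i x)

lemma iterA_zero (c : Fin N → ℝ) (h : Fin N → Euc d → Euc d) (φ0 : Euc d → ℝ) :
    iterA c h φ0 0 = φ0 := rfl

lemma iterA_succ (c : Fin N → ℝ) (h : Fin N → Euc d → Euc d) (φ0 : Euc d → ℝ) (k : ℕ) (x : Euc d) :
    iterA c h φ0 (k+1) x = ∑ i, c i * iterA c h φ0 k (h i x) := rfl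

lemma iterA_cont {c : Fin N → ℝ} {h : Fin N → Euc d → Euc d} {φ0 : Euc d → ℝ}
    (hh : ∀ i, Continuous (h i)) (hφ : Continuous φ0) (k : ℕ) :
    Continuous (iterA c h φ0 k) := by
  induction k with
  | zero => exact hφ
  | succ k ih =>
    show Continuous fun x => ∑ i, c i * iterA c h φ0 k (h i x)
    exact continuous_finset_sum _ fun i _ => (continuous_const.mul (ih.comp (hh i)))

lemma iterA_bound {c : Fin N → ℝ} {h : Fin N → Euc d → Euc d} {φ0 : Euc d → ℝ} {M : ℝ}
    (hc0 : ∀ i, 0 ≤ c i) (hc1 : ∑ i, c i = 1) (hφ : ∀ x, |φ0 x| ≤ M) (k : ℕ) (x : Euc d) :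
    |iterA c h φ0 k x| ≤ M := by
  induction k generalizing x with
  | zero => exact hφ x
  | succ k ih =>
    rw [iterA_succ]
    calc |∑ i, c i * iterA c h φ0 k (h i x)| ≤ ∑ i, |c i * iterA c h φ0 k (h i x)| :=
          Finset.abs_sum_le_sum_abs _ _
      _ ≤ ∑ i, c i * M := by
          apply Finset.sum_le_sum
          intro i _
          rw [abs_mul, abs_of_nonneg (hc0 i)]
          exact mul_le_mul_of_nonneg_left (ih _) (hc0 i)
      _ = M := by rw [← Finset.sum_mul, hc1, one_mul]

/-- modulus-of-continuity propagation -/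
lemma iterA_mod {X : Set (Euc d)} {c ρ : Fin N → ℝ} {h : Fin N → Euc d → Euc d}
    {φ0 : Euc d → ℝ} {R' η θ : ℝ} (hR'0 : 0 ≤ R')
    (hmaps : ∀ i, ∀ x ∈ X, h i x ∈ X)
    (hsim : ∀ i x y, dist (h i x) (h i y) = ρ i * dist x y)
    (hρ : ∀ i, ρ i ≤ R')
    (hc0 : ∀ i, 0 ≤ c i) (hc1 : ∑ i, c i = 1)
    (hmod : ∀ x ∈ X, ∀ y ∈ X, dist x y ≤ θ → |φ0 x - φ0 y| ≤ η) :
    ∀ k, ∀ x ∈ X, ∀ y ∈ X, dist x y * R' ^ k ≤ θ →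
      |iterA c h φ0 k x - iterA c h φ0 k y| ≤ η := by
  intro k
  induction k with
  | zero =>
    intro x hx y hy hd
    exact hmod x hx y hy (by simpa using hd)
  | succ k ih =>
    intro x hx y hy hd
    rw [iterA_succ, iterA_succ, ← Finset.sum_sub_distrib]
    have key : ∀ i : Fin N,
        |iterA c h φ0 k (h i x) - iterA c h φ0 k (h i y)| ≤ η := by
      intro i
      apply ih (h i x) (hmaps i x hx) (h i y) (hmaps i y hy)
      rw [hsim i x y]
      calc ρ i * dist x y * R' ^ k ≤ R' * dist x y * R' ^ k := by
            apply mul_le_mul_of_nonneg_right (mul_le_mul_of_nonneg_right (hρ i) dist_nonneg)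
              (pow_nonneg hR'0 k)
        _ = dist x y * R' ^ (k + 1) := by ring
        _ ≤ θ := hd
    calc |∑ i, (c i * iterA c h φ0 k (h i x) - c i * iterA c h φ0 k (h i y))|
        ≤ ∑ i, |c i * iterA c h φ0 k (h i x) - c i * iterA c h φ0 k (h i y)| :=
          Finset.abs_sum_le_sum_abs _ _
      _ ≤ ∑ i, c i * η := by
          apply Finset.sum_le_sum
          intro i _
          rw [← mul_sub, abs_mul, abs_of_nonneg (hc0 i)]
          exact mul_le_mul_of_nonneg_left (key i) (hc0 i)
      _ = η := by rw [← Finset.sum_mul, hc1, one_mul]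

/-- comparison of the two iterated approximations -/
lemma iterA_compare {X : Set (Euc d)} {cF cG : Fin N → ℝ} {f g : Fin N → Euc d → Euc d}
    {φ0 : Euc d → ℝ} {δ' η' β M : ℝ}
    (hmapsF : ∀ i, ∀ x ∈ X, f i x ∈ X)
    (hmapsG : ∀ i, ∀ x ∈ X, g i x ∈ X)
    (hcF0 : ∀ i, 0 ≤ cF i) (hcF1 : ∑ i, cF i = 1)
    (hdist : ∀ i, ∀ x ∈ X, dist (f i x) (g i x) ≤ δ')
    (hmodG : ∀ k, ∀ u ∈ X, ∀ v ∈ X, dist u v ≤ δ' →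
      |iterA cG g φ0 k u - iterA cG g φ0 k v| ≤ η')
    (hMG : ∀ k x, |iterA cG g φ0 k x| ≤ M)
    (hβ : ∑ i, |cF i - cG i| ≤ β) :
    ∀ k, ∀ z ∈ X, |iterA cF f φ0 k z - iterA cG g φ0 k z| ≤ k * (η' + β * M) := by
  have hM0 : 0 ≤ M := le_trans (abs_nonneg _) (hMG 0 0)
  intro k
  induction k with
  | zero => intro z _; simp [iterA_zero]
  | succ k ih =>
    intro z hz
    rw [iterA_succ, iterA_succ, ← Finset.sum_sub_distrib]
    have key : ∀ i : Fin N,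
        |cF i * iterA cF f φ0 k (f i z) - cG i * iterA cG g φ0 k (g i z)| ≤
          cF i * (k * (η' + β * M)) + cF i * η' + |cF i - cG i| * M := by
      intro i
      set A := iterA cF f φ0 k (f i z)
      set C := iterA cG g φ0 k (f i z)
      set B := iterA cG g φ0 k (g i z)
      have e1 : cF i * A - cG i * B = cF i * (A - C) + cF i * (C - B) + (cF i - cG i) * B := by
        ring
      rw [e1]
      have h1 : |cF i * (A - C)| ≤ cF i * (k * (η' + β * M)) := by
        rw [abs_mul, abs_of_nonneg (hcF0 i)]
        exact mul_le_mul_of_nonneg_left (ih (f i z) (hmapsF i z hz)) (hcF0 i)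
      have h2 : |cF i * (C - B)| ≤ cF i * η' := by
        rw [abs_mul, abs_of_nonneg (hcF0 i)]
        refine mul_le_mul_of_nonneg_left ?_ (hcF0 i)
        exact hmodG k (f i z) (hmapsF i z hz) (g i z) (hmapsG i z hz) (hdist i z hz)
      have h3 : |(cF i - cG i) * B| ≤ |cF i - cG i| * M := by
        rw [abs_mul]
        exact mul_le_mul_of_nonneg_left (hMG k (g i z)) (abs_nonneg _)
      calc |cF i * (A - C) + cF i * (C - B) + (cF i - cG i) * B|
          ≤ |cF i * (A - C)| + |cF i * (C - B)| + |(cF i - cG i) * B| := abs_add_three _ _ _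
        _ ≤ cF i * (k * (η' + β * M)) + cF i * η' + |cF i - cG i| * M := by
            linarith
    calc |∑ i, (cF i * iterA cF f φ0 k (f i z) - cG i * iterA cG g φ0 k (g i z))|
        ≤ ∑ i, |cF i * iterA cF f φ0 k (f i z) - cG i * iterA cG g φ0 k (g i z)| :=
          Finset.abs_sum_le_sum_abs _ _
      _ ≤ ∑ i, (cF i * (k * (η' + β * M)) + cF i * η' + |cF i - cG i| * M) :=
          Finset.sum_le_sum fun i _ => key i
      _ = (∑ i, cF i) * (k * (η' + β * M)) + (∑ i, cF i) * η' + (∑ i, |cF i - cG i|) * M := by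
          rw [Finset.sum_add_distrib, Finset.sum_add_distrib, Finset.sum_mul, Finset.sum_mul,
            Finset.sum_mul]
      _ ≤ 1 * (k * (η' + β * M)) + 1 * η' + β * M := by
          rw [hcF1]
          have : (∑ i, |cF i - cG i|) * M ≤ β * M := mul_le_mul_of_nonneg_right hβ hM0
          linarith
      _ = (↑(k + 1) : ℝ) * (η' + β * M) := by push_cast; ring


/-- the measure written as a weighted sum of pushforwards -/
lemma measure_eq_sum {μ : Measure (Euc d)} {c : Fin N → ℝ} {h : Fin N → Euc d → Euc d}
    (hh : ∀ i, Continuous (h i))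
    (hrel : ∀ A : Set (Euc d), MeasurableSet A →
      μ A = ∑ i, ENNReal.ofReal (c i) * μ (h i ⁻¹' A)) :
    μ = ∑ i, (ENNReal.ofReal (c i)) • Measure.map (h i) μ := by
  ext A hA
  rw [hrel A hA]
  rw [Measure.coe_finset_sum, Finset.sum_apply]
  congr 1
  ext i
  rw [Measure.smul_apply, Measure.map_apply (hh i).measurable hA, smul_eq_mul]

/-- invariance of the integral under the transfer operator iteration -/
lemma iterA_integral {μ : Measure (Euc d)} [IsProbabilityMeasure μ]
    {c : Fin N → ℝ} {h : Fin N → Euc d → Euc d} {φ0 : Euc d → ℝ} {M : ℝ}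
    (hh : ∀ i, Continuous (h i)) (hc0 : ∀ i, 0 ≤ c i) (hc1 : ∑ i, c i = 1)
    (hφc : Continuous φ0) (hφM : ∀ x, |φ0 x| ≤ M)
    (hrel : ∀ A : Set (Euc d), MeasurableSet A →
      μ A = ∑ i, ENNReal.ofReal (c i) * μ (h i ⁻¹' A)) :
    ∀ k, ∫ x, iterA c h φ0 k x ∂μ = ∫ x, φ0 x ∂μ := by
  have hint : ∀ (ν : Measure (Euc d)) (_ : IsFiniteMeasure ν) (χ : Euc d → ℝ),
      Continuous χ → (∀ x, |χ x| ≤ M) → Integrable χ ν := by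
    intro ν hν χ hχc hχM
    exact ⟨hχc.aestronglyMeasurable,
      HasFiniteIntegral.of_bounded (C := M) (Eventually.of_forall fun x => hχM x)⟩
  have honestep : ∀ (χ : Euc d → ℝ), Continuous χ → (∀ x, |χ x| ≤ M) →
      ∫ x, χ x ∂μ = ∑ i, c i * ∫ x, χ (h i x) ∂μ := by
    intro χ hχc hχM
    have hmeq := measure_eq_sum hh hrel
    have hfin : ∀ i : Fin N, IsFiniteMeasure ((ENNReal.ofReal (c i)) • Measure.map (h i) μ) := by
      intro i
      haveI : IsProbabilityMeasure (Measure.map (h i) μ) :=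
        Measure.isProbabilityMeasure_map (hh i).measurable.aemeasurable
      constructor
      rw [Measure.smul_apply, smul_eq_mul, measure_univ, mul_one]
      exact ENNReal.ofReal_lt_top
    calc ∫ x, χ x ∂μ = ∫ x, χ x ∂(∑ i, (ENNReal.ofReal (c i)) • Measure.map (h i) μ) := by
          rw [← hmeq]
      _ = ∑ i, ∫ x, χ x ∂((ENNReal.ofReal (c i)) • Measure.map (h i) μ) := by
          apply integral_finset_sum_measure
          intro i _
          exact hint _ (hfin i) χ hχc hχM
      _ = ∑ i, c i * ∫ x, χ (h i x) ∂μ := by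
          apply Finset.sum_congr rfl
          intro i _
          rw [integral_smul_measure, ENNReal.toReal_ofReal (hc0 i), smul_eq_mul]
          congr 1
          exact integral_map (hh i).measurable.aemeasurable
            (hχc.aestronglyMeasurable.mono_measure le_rfl |>.mono_ac (by
              exact Measure.absolutelyContinuous_refl _))
  intro k
  induction k with
  | zero => rfl
  | succ k ih =>
    have hcont : Continuous (iterA c h φ0 k) := iterA_cont hh hφc k
    have hbd : ∀ x, |iterA c h φ0 k x| ≤ M := iterA_bound hc0 hc1 hφM k
    have e1 : ∫ x, iterA c h φ0 (k+1) x ∂μ = ∑ i, c i * ∫ x, iterA c h φ0 k (h i x) ∂μ := by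
      have : ∀ x, iterA c h φ0 (k+1) x = ∑ i, c i * iterA c h φ0 k (h i x) := fun x => rfl
      rw [show (fun x => iterA c h φ0 (k+1) x) = fun x => ∑ i, c i * iterA c h φ0 k (h i x) from
        funext this]
      rw [integral_finset_sum]
      · apply Finset.sum_congr rfl
        intro i _
        exact integral_const_mul _ _
      · intro i _
        exact (hint μ inferInstance _ (hcont.comp (hh i)) (fun x => hbd _)).const_mul _
    rw [e1, ← honestep _ hcont hbd, ih]

/-- concentration: any invariant probability measure is supported on the attractor -/
lemma conc {μ : Measure (Euc d)} [IsProbabilityMeasure μ]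
    {c ρ : Fin N → ℝ} {h : Fin N → Euc d → Euc d} {K : Set (Euc d)} {R' : ℝ}
    (hKcl : IsClosed K) (hKne : K.Nonempty) (hinv : ∀ i, h i '' K ⊆ K)
    (hsim : ∀ i x y, dist (h i x) (h i y) = ρ i * dist x y)
    (hh : ∀ i, Continuous (h i))
    (hρR : ∀ i, ρ i ≤ R') (hR'0 : 0 < R') (hR'1 : R' < 1)
    (hc0 : ∀ i, 0 ≤ c i) (hc1 : ∑ i, c i = 1)
    (hrel : ∀ A : Set (Euc d), MeasurableSet A →
      μ A = ∑ i, ENNReal.ofReal (c i) * μ (h i ⁻¹' A)) :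
    μ Kᶜ = 0 := by
  obtain ⟨q0, hq0⟩ := id hKne
  set Sc : ℝ → Set (Euc d) := fun t => {x | t ≤ infDist x K} with hSc_def
  have hSm : ∀ t, MeasurableSet (Sc t) := fun t =>
    (isClosed_le continuous_const (continuous_infDist_pt K)).measurableSet
  have hsumc : (∑ i, ENNReal.ofReal (c i)) = 1 := by
    rw [← ENNReal.ofReal_sum_of_nonneg fun i _ => hc0 i, hc1, ENNReal.ofReal_one]
  have hstep : ∀ t : ℝ, 0 < t → μ (Sc t) ≤ μ (Sc (t / R')) := by
    intro t ht
    have hsub : ∀ i, h i ⁻¹' (Sc t) ⊆ Sc (t / R') := by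
      intro i x hx
      simp only [hSc_def, mem_preimage, mem_setOf_eq] at hx ⊢
      by_contra hlt
      push_neg at hlt
      obtain ⟨q, hq, hdq⟩ := (infDist_lt_iff hKne).1 hlt
      have h1 : infDist (h i x) K ≤ dist (h i x) (h i q) :=
        infDist_le_dist_of_mem (hinv i ⟨q, hq, rfl⟩)
      rw [hsim i x q] at h1
      have hρ0 : 0 ≤ ρ i := by
        by_contra hneg
        push_neg at hneg
        have := hsim i x q
        nlinarith [dist_nonneg (x := h i x) (y := h i q), dist_nonneg (x := x) (y := q),
          hx.trans h1, ht]
      have : t ≤ R' * dist x q := by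
        calc t ≤ ρ i * dist x q := hx.trans h1
          _ ≤ R' * dist x q := mul_le_mul_of_nonneg_right (hρR i) dist_nonneg
      have : t < R' * (t / R') := lt_of_le_of_lt this (by
        apply mul_lt_mul_of_pos_left hdq hR'0)
      rw [mul_div_cancel₀ _ hR'0.ne'] at this
      exact lt_irrefl _ this
    calc μ (Sc t) = ∑ i, ENNReal.ofReal (c i) * μ (h i ⁻¹' (Sc t)) := hrel _ (hSm t)
      _ ≤ ∑ i, ENNReal.ofReal (c i) * μ (Sc (t / R')) := by
          apply Finset.sum_le_sum
          intro i _
          exact mul_le_mul_right (measure_mono (hsub i)) _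
      _ = (∑ i, ENNReal.ofReal (c i)) * μ (Sc (t / R')) := by rw [Finset.sum_mul]
      _ = μ (Sc (t / R')) := by rw [hsumc, one_mul]
  have hiter : ∀ t : ℝ, 0 < t → ∀ k : ℕ, μ (Sc t) ≤ μ (Sc (t / R' ^ k)) := by
    intro t ht k
    induction k with
    | zero => simp
    | succ k ih =>
      have ht' : 0 < t / R' ^ k := div_pos ht (pow_pos hR'0 k)
      calc μ (Sc t) ≤ μ (Sc (t / R' ^ k)) := ih
        _ ≤ μ (Sc (t / R' ^ k / R')) := hstep _ ht'
        _ = μ (Sc (t / R' ^ (k+1))) := by rw [div_div, ← pow_succ]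
  have hball : ∀ u : ℝ, Sc u ⊆ (ball q0 u)ᶜ := by
    intro u x hx
    simp only [hSc_def, mem_setOf_eq] at hx
    simp only [mem_compl_iff, mem_ball, not_lt]
    exact le_trans hx (infDist_le_dist_of_mem hq0)
  have hlim : Tendsto (fun n : ℕ => μ ((ball q0 (n : ℝ))ᶜ)) atTop (nhds 0) := by
    have h1 : Tendsto (fun n : ℕ => μ ((ball q0 (n : ℝ))ᶜ)) atTop
        (nhds (μ (⋂ n : ℕ, (ball q0 (n : ℝ))ᶜ))) := by
      apply tendsto_measure_iInter_atTop
      · exact fun n => (measurableSet_ball.compl).nullMeasurableSet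
      · intro m n hmn
        apply compl_subset_compl.2
        exact ball_subset_ball (by exact_mod_cast hmn)
      · exact ⟨0, measure_ne_top μ _⟩
    have h2 : (⋂ n : ℕ, (ball q0 (n : ℝ))ᶜ) = ∅ := by
      ext x
      simp only [mem_iInter, mem_compl_iff, mem_ball, not_lt, mem_empty_iff_false, iff_false,
        not_forall, not_le]
      obtain ⟨n, hn⟩ := exists_nat_gt (dist x q0)
      exact ⟨n, hn⟩
    rwa [h2, measure_empty] at h1
  have hS0 : ∀ t : ℝ, 0 < t → μ (Sc t) = 0 := by
    intro t ht
    have hbound : ∀ n : ℕ, μ (Sc t) ≤ μ ((ball q0 (n : ℝ))ᶜ) := by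
      intro n
      obtain ⟨k, hk⟩ := pow_unbounded_of_one_lt ((n : ℝ) / t) (one_lt_inv_iff₀.2 ⟨hR'0, hR'1⟩ :
        1 < R'⁻¹)
      have hkk : (n : ℝ) ≤ t / R' ^ k := by
        rw [div_lt_iff₀ ht] at hk
        rw [le_div_iff₀ (pow_pos hR'0 k)]
        have hinvk : R'⁻¹ ^ k * R' ^ k = 1 := by
          rw [← mul_pow, inv_mul_cancel₀ hR'0.ne', one_pow]
        nlinarith [pow_pos hR'0 k]
      calc μ (Sc t) ≤ μ (Sc (t / R' ^ k)) := hiter t ht k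
        _ ≤ μ ((ball q0 (t / R' ^ k))ᶜ) := measure_mono (hball _)
        _ ≤ μ ((ball q0 (n : ℝ))ᶜ) := measure_mono (compl_subset_compl.2 (ball_subset_ball hkk))
    have := ge_of_tendsto hlim (Eventually.of_forall hbound)
    exact le_antisymm (le_trans (le_of_eq rfl) this) zero_le
  have hcover : Kᶜ ⊆ ⋃ n : ℕ, Sc (1 / ((n : ℝ) + 1)) := by
    intro x hx
    have hpos : 0 < infDist x K := (hKcl.notMem_iff_infDist_pos hKne).1 hx
    obtain ⟨n, hn⟩ := exists_nat_one_div_lt hpos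
    exact mem_iUnion.2 ⟨n, le_of_lt hn⟩
  refine measure_mono_null hcover ?_
  exact measure_iUnion_null fun n => hS0 _ (by positivity)

end S17

set_option maxHeartbeats 1000000 in
/-- the map `f ↦ λ(f)` from `M_Δ` to Borel probability measures
with the weak topology is continuous: integrals of bounded continuous functions
vary continuously. -/
theorem stmt17
    {d N : ℕ} (hN : 2 ≤ N) (X : Set (Euc d)) (hX : IsCompact X)
    (Δ : ℝ) (hΔ : 0 < Δ)
    (F : IFS d N X) (hF : sep Δ F)
    (sF : ℝ) (hsF : ∑ i, F.r i ^ sF = 1)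
    (μF : Measure (Euc d)) (hμFp : IsProbabilityMeasure μF)
    (hμFss : ∀ A : Set (Euc d), MeasurableSet A →
      μF A = ∑ i, ENNReal.ofReal (F.r i ^ sF) * μF (F.f i ⁻¹' A)) :
    ∀ φ : BoundedContinuousFunction (Euc d) ℝ, ∀ ε > (0 : ℝ), ∃ δ > (0 : ℝ),
      ∀ G : IFS d N X, sep Δ G → Dle F G δ →
      ∀ sG : ℝ, (∑ i, G.r i ^ sG = 1) →
      ∀ μG : Measure (Euc d), IsProbabilityMeasure μG →
      (∀ A : Set (Euc d), MeasurableSet A →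
        μG A = ∑ i, ENNReal.ofReal (G.r i ^ sG) * μG (G.f i ⁻¹' A)) →
        |(∫ x, φ x ∂μF) - ∫ x, φ x ∂μG| ≤ ε := by
  intro φ ε hε
  have hN0 : 0 < N := by omega
  have hN1' : 1 ≤ N := by omega
  have hN1 : (1:ℝ) ≤ N := by exact_mod_cast hN1'
  set i0 : Fin N := ⟨0, by omega⟩ with hi0
  set i1 : Fin N := ⟨1, by omega⟩ with hi1
  have hi01 : i0 ≠ i1 := by simp [hi0, hi1, Fin.ext_iff]
  have hane : (Finset.univ : Finset (Fin N)).Nonempty := ⟨i0, Finset.mem_univ _⟩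
  set mA : ℝ := Finset.univ.inf' hane F.r with hmA_def
  set MA : ℝ := Finset.univ.sup' hane F.r with hMA_def
  have hmA_le : ∀ i, mA ≤ F.r i := fun i => Finset.inf'_le _ (Finset.mem_univ i)
  have hMA_ge : ∀ i, F.r i ≤ MA := fun i => Finset.le_sup' _ (Finset.mem_univ i)
  have hmA_pos : 0 < mA := by
    rw [hmA_def, Finset.lt_inf'_iff]
    exact fun i _ => F.r_pos i
  have hMA_lt1 : MA < 1 := by
    rw [hMA_def, Finset.sup'_lt_iff]
    exact fun i _ => F.r_lt1 i
  have hMA_pos : 0 < MA := lt_of_lt_of_le (F.r_pos i0) (hMA_ge i0)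
  have hmA_lt1 : mA < 1 := lt_of_le_of_lt ((hmA_le i0).trans (hMA_ge i0)) hMA_lt1
  set m' : ℝ := mA / 2 with hm'_def
  set R' : ℝ := (1 + MA) / 2 with hR'_def
  have hm'0 : 0 < m' := by rw [hm'_def]; linarith
  have hm'1 : m' < 1 := by rw [hm'_def]; linarith
  have hm'mA : m' ≤ mA := by rw [hm'_def]; linarith
  have hR'0 : 0 < R' := by rw [hR'_def]; linarith
  have hR'1 : R' < 1 := by rw [hR'_def]; linarith
  have hMAR' : MA ≤ R' := by rw [hR'_def]; linarith
  have hlogR' : 0 < -Real.log R' := by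
    have := Real.log_neg hR'0 hR'1
    linarith
  set S : ℝ := Real.log N / (-Real.log R') with hS_def
  have hS0 : 0 ≤ S := div_nonneg (Real.log_nonneg hN1) hlogR'.le
  set C1 : ℝ := S * Real.exp S / m' with hC1_def
  have hC10 : 0 ≤ C1 := by
    rw [hC1_def]
    positivity
  have hcF0 : ∀ i, 0 ≤ F.r i ^ sF := fun i => Real.rpow_nonneg (F.r_pos i).le _
  have hsF0 : 0 ≤ sF := by
    by_contra hneg
    push_neg at hneg
    have h1 : 1 < F.r i0 ^ sF :=
      (Real.one_lt_rpow_iff_of_pos (F.r_pos i0)).2 (Or.inr ⟨F.r_lt1 i0, hneg⟩)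
    have h2 : F.r i0 ^ sF ≤ ∑ i, F.r i ^ sF :=
      Finset.single_le_sum (fun i _ => hcF0 i) (Finset.mem_univ i0)
    rw [hsF] at h2
    linarith
  set c2 : ℝ := F.r i0 ^ sF * (1 - F.r i0) with hc2_def
  have hc20 : 0 < c2 :=
    mul_pos (Real.rpow_pos_of_pos (F.r_pos i0) _) (by linarith [F.r_lt1 i0])
  set L2 : ℝ := -Real.log m' with hL2_def
  have hL20 : 0 < L2 := by
    have := Real.log_neg hm'0 hm'1
    rw [hL2_def]
    linarith
  set C3 : ℝ := C1 + max L2 1 * (N * C1) / c2 with hC3_def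
  have hC30 : 0 ≤ C3 := by
    rw [hC3_def]
    have h1 : (0:ℝ) ≤ max L2 1 := le_trans zero_le_one (le_max_right _ _)
    have h2 : (0:ℝ) ≤ (N:ℝ) := Nat.cast_nonneg _
    positivity
  set M : ℝ := ‖φ‖ + 1 with hM_def
  have hM0 : 0 < M := by
    rw [hM_def]
    positivity
  have hφM : ∀ x, |φ x| ≤ M := by
    intro x
    have := φ.norm_coe_le_norm x
    rw [Real.norm_eq_abs] at this
    rw [hM_def]
    linarith
  obtain ⟨x0, hx0K⟩ := F.K_ne
  have hx0X : x0 ∈ X := F.K_sub hx0K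
  have hXbd : Bornology.IsBounded X := hX.isBounded
  set D0 : ℝ := diam X with hD0_def
  have hD00 : 0 ≤ D0 := diam_nonneg
  set η : ℝ := ε / 4 with hη_def
  have hη0 : 0 < η := by rw [hη_def]; linarith
  have huc := Metric.uniformContinuousOn_iff.1
    (hX.uniformContinuousOn_of_continuous φ.continuous.continuousOn)
  obtain ⟨θ, hθ0, hθ⟩ := huc η hη0
  have hmodη : ∀ x ∈ X, ∀ y ∈ X, dist x y ≤ θ/2 → |φ x - φ y| ≤ η := by
    intro x hx y hy hd
    have := hθ x hx y hy (lt_of_le_of_lt hd (by linarith))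
    rw [Real.dist_eq] at this
    exact this.le
  obtain ⟨k, hk⟩ := exists_pow_lt_of_lt_one (show (0:ℝ) < (θ/2) / (D0 + 1) by positivity) hR'1
  have hkD : D0 * R' ^ k ≤ θ / 2 := by
    have h1 : D0 * R' ^ k ≤ D0 * ((θ/2)/(D0+1)) :=
      mul_le_mul_of_nonneg_left hk.le hD00
    have h2 : D0 * ((θ/2)/(D0+1)) ≤ (D0+1) * ((θ/2)/(D0+1)) := by
      have h : (0:ℝ) ≤ (θ/2)/(D0+1) := by positivity
      exact mul_le_mul_of_nonneg_right (by linarith) h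
    have h3 : (D0+1) * ((θ/2)/(D0+1)) = θ/2 := by
      field_simp
    linarith
  set η' : ℝ := ε / (4 * (k+1)) with hη'_def
  have hη'0 : 0 < η' := by rw [hη'_def]; positivity
  obtain ⟨θ', hθ'0, hθ'⟩ := huc η' hη'0
  have hmodη' : ∀ x ∈ X, ∀ y ∈ X, dist x y ≤ θ'/2 → |φ x - φ y| ≤ η' := by
    intro x hx y hy hd
    have := hθ' x hx y hy (lt_of_le_of_lt hd (by linarith))
    rw [Real.dist_eq] at this
    exact this.le
  set emax : ℝ := min (min m' ((1 - MA)/2)) (ε / (4 * (k+1) * (N * C3 * M + 1))) with hemax_def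
  have hemax0 : 0 < emax := by
    apply lt_min (lt_min hm'0 (by linarith))
    have : (0:ℝ) ≤ N * C3 * M := by positivity
    positivity
  set δ : ℝ := min (θ'/2) (Δ * emax / 2) with hδ_def
  have hδ0 : 0 < δ := lt_min (by linarith) (by positivity)
  refine ⟨δ, hδ0, ?_⟩
  intro G hGsep hDle sG hsG μG hμGp hμGrel
  have hδθ' : δ ≤ θ'/2 := min_le_left _ _
  set e : ℝ := 2 * δ / Δ with he_def
  have he0 : 0 ≤ e := by rw [he_def]; positivity
  have hδe : e ≤ emax := by
    have h1 : δ ≤ Δ * emax / 2 := min_le_right _ _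
    rw [he_def, div_le_iff₀ hΔ]
    linarith
  have he_m' : e ≤ m' := le_trans hδe (le_trans (min_le_left _ _) (min_le_left _ _))
  have he_MA : e ≤ (1 - MA)/2 := le_trans hδe (le_trans (min_le_left _ _) (min_le_right _ _))
  have he_ε : e ≤ ε / (4 * (k+1) * (N * C3 * M + 1)) := le_trans hδe (min_le_right _ _)
  -- contraction-ratio comparison
  have hab : ∀ i, |F.r i - G.r i| ≤ e := by
    intro i
    set p := F.f i0 x0 with hp_def
    set q := F.f i1 x0 with hq_def
    have hpq : Δ < dist p q := hF i0 i1 hi01 p ⟨x0, hx0K, rfl⟩ q ⟨x0, hx0K, rfl⟩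
    have hpX : p ∈ X := F.maps i0 ⟨x0, hx0X, rfl⟩
    have hqX : q ∈ X := F.maps i1 ⟨x0, hx0X, rfl⟩
    have h1 : |dist (F.f i p) (F.f i q) - dist (G.f i p) (G.f i q)| ≤ 2 * δ := by
      have h2 := dist_dist_dist_le (F.f i p) (F.f i q) (G.f i p) (G.f i q)
      rw [Real.dist_eq] at h2
      have d1 := hDle i p hpX
      have d2 := hDle i q hqX
      linarith
    rw [F.sim i, G.sim i, ← sub_mul, abs_mul, abs_of_nonneg dist_nonneg] at h1
    rw [he_def, le_div_iff₀ hΔ]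
    calc |F.r i - G.r i| * Δ ≤ |F.r i - G.r i| * dist p q :=
          mul_le_mul_of_nonneg_left hpq.le (abs_nonneg _)
      _ ≤ 2 * δ := h1
  have hbm : ∀ i, m' ≤ G.r i := by
    intro i
    have h1 := (abs_le.1 (hab i)).2
    have h2 := hmA_le i
    rw [hm'_def] at he_m' ⊢
    linarith
  have hbR : ∀ i, G.r i ≤ R' := by
    intro i
    have h1 := (abs_le.1 (hab i)).1
    have h2 := hMA_ge i
    rw [hR'_def]
    linarith
  have hb1 : ∀ i, G.r i ≤ 1 := fun i => (hbR i).trans hR'1.le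
  have hcG0 : ∀ i, 0 ≤ G.r i ^ sG := fun i => Real.rpow_nonneg (G.r_pos i).le _
  have hsG0 : 0 ≤ sG := by
    by_contra hneg
    push_neg at hneg
    have h1 : 1 < G.r i0 ^ sG :=
      (Real.one_lt_rpow_iff_of_pos (G.r_pos i0)).2
        (Or.inr ⟨lt_of_le_of_lt (hbR i0) hR'1, hneg⟩)
    have h2 : G.r i0 ^ sG ≤ ∑ i, G.r i ^ sG :=
      Finset.single_le_sum (fun i _ => hcG0 i) (Finset.mem_univ i0)
    rw [hsG] at h2
    linarith
  have hsGS : sG ≤ S := by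
    have h1 : (1:ℝ) ≤ N * R' ^ sG := by
      calc (1:ℝ) = ∑ i, G.r i ^ sG := hsG.symm
        _ ≤ ∑ _i : Fin N, R' ^ sG :=
            Finset.sum_le_sum fun i _ => Real.rpow_le_rpow (G.r_pos i).le (hbR i) hsG0
        _ = N * R' ^ sG := by
            rw [Finset.sum_const, Finset.card_univ, Fintype.card_fin, nsmul_eq_mul]
    have hRs : (0:ℝ) < R' ^ sG := Real.rpow_pos_of_pos hR'0 _
    have h2 : (1:ℝ)/N ≤ R' ^ sG := by
      rw [div_le_iff₀ (show (0:ℝ) < (N:ℝ) by positivity)]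
      calc (1:ℝ) ≤ N * R' ^ sG := h1
        _ = R' ^ sG * N := mul_comm _ _
    have h3 : Real.log ((1:ℝ)/N) ≤ Real.log (R' ^ sG) := Real.log_le_log (by positivity) h2
    rw [Real.log_rpow hR'0, Real.log_div one_ne_zero (by positivity), Real.log_one] at h3
    rw [hS_def, le_div_iff₀ hlogR']
    linarith [h3]
  have haIn : ∀ i, m' ≤ F.r i ∧ F.r i ≤ 1 :=
    fun i => ⟨le_trans hm'mA (hmA_le i), (F.r_lt1 i).le⟩
  have hbase : ∀ i, |F.r i ^ sG - G.r i ^ sG| ≤ C1 * e := by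
    intro i
    have h := S17.rpow_base_diff hm'0 (haIn i).1 (haIn i).2 (hbm i) (hb1 i)
      ((hab i).trans he_m') hsG0 hsGS
    calc |F.r i ^ sG - G.r i ^ sG| ≤ S * Real.exp S / m' * |F.r i - G.r i| := h
      _ ≤ S * Real.exp S / m' * e :=
          mul_le_mul_of_nonneg_left (hab i) (by positivity)
      _ = C1 * e := by rw [hC1_def]
  have hsum : |∑ i, F.r i ^ sG - 1| ≤ N * (C1 * e) := by
    rw [← hsG]
    calc |∑ i, F.r i ^ sG - ∑ i, G.r i ^ sG|
        = |∑ i, (F.r i ^ sG - G.r i ^ sG)| := by rw [Finset.sum_sub_distrib]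
      _ ≤ ∑ i, |F.r i ^ sG - G.r i ^ sG| := Finset.abs_sum_le_sum_abs _ _
      _ ≤ ∑ _i : Fin N, C1 * e := Finset.sum_le_sum fun i _ => hbase i
      _ = N * (C1 * e) := by
          rw [Finset.sum_const, Finset.card_univ, Fintype.card_fin, nsmul_eq_mul]
  have hmin : min |sG - sF| 1 * c2 ≤ N * (C1 * e) := by
    rcases le_total sF sG with hcase | hcase
    · have hterm : ∀ i : Fin N, 0 ≤ F.r i ^ sF - F.r i ^ sG := fun i =>
        sub_nonneg.2 (Real.rpow_le_rpow_of_exponent_ge (F.r_pos i) (F.r_lt1 i).le hcase)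
      have h1 : F.r i0 ^ sF - F.r i0 ^ sG ≤ ∑ i, (F.r i ^ sF - F.r i ^ sG) :=
        Finset.single_le_sum (fun i _ => hterm i) (Finset.mem_univ i0)
      have h2 : ∑ i, (F.r i ^ sF - F.r i ^ sG) = 1 - ∑ i, F.r i ^ sG := by
        rw [Finset.sum_sub_distrib, hsF]
      have h3 : F.r i0 ^ sG = F.r i0 ^ sF * F.r i0 ^ (sG - sF) := by
        rw [← Real.rpow_add (F.r_pos i0)]
        ring_nf
      have h4 := S17.one_sub_rpow_lower (F.r_pos i0) (F.r_lt1 i0).le (sub_nonneg.2 hcase)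
      have h5 : c2 * min (sG - sF) 1 ≤ F.r i0 ^ sF - F.r i0 ^ sG := by
        rw [h3, hc2_def]
        calc F.r i0 ^ sF * (1 - F.r i0) * min (sG - sF) 1
            = F.r i0 ^ sF * ((1 - F.r i0) * min (sG - sF) 1) := by ring
          _ ≤ F.r i0 ^ sF * (1 - F.r i0 ^ (sG - sF)) :=
              mul_le_mul_of_nonneg_left h4 (hcF0 i0)
          _ = F.r i0 ^ sF - F.r i0 ^ sF * F.r i0 ^ (sG - sF) := by ring
      have habs : |sG - sF| = sG - sF := abs_of_nonneg (by linarith)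
      have h6 : 1 - ∑ i, F.r i ^ sG ≤ |∑ i, F.r i ^ sG - 1| := by
        rw [abs_sub_comm]
        exact le_abs_self _
      calc min |sG - sF| 1 * c2 = c2 * min (sG - sF) 1 := by rw [habs]; ring
        _ ≤ F.r i0 ^ sF - F.r i0 ^ sG := h5
        _ ≤ 1 - ∑ i, F.r i ^ sG := by linarith
        _ ≤ |∑ i, F.r i ^ sG - 1| := h6
        _ ≤ N * (C1 * e) := hsum
    · have hterm : ∀ i : Fin N, 0 ≤ F.r i ^ sG - F.r i ^ sF := fun i =>
        sub_nonneg.2 (Real.rpow_le_rpow_of_exponent_ge (F.r_pos i) (F.r_lt1 i).le hcase)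
      have h1 : F.r i0 ^ sG - F.r i0 ^ sF ≤ ∑ i, (F.r i ^ sG - F.r i ^ sF) :=
        Finset.single_le_sum (fun i _ => hterm i) (Finset.mem_univ i0)
      have h2 : ∑ i, (F.r i ^ sG - F.r i ^ sF) = (∑ i, F.r i ^ sG) - 1 := by
        rw [Finset.sum_sub_distrib, hsF]
      have h3 : F.r i0 ^ sF = F.r i0 ^ sG * F.r i0 ^ (sF - sG) := by
        rw [← Real.rpow_add (F.r_pos i0)]
        ring_nf
      have h4 := S17.one_sub_rpow_lower (F.r_pos i0) (F.r_lt1 i0).le (sub_nonneg.2 hcase)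
      have hpow_le : F.r i0 ^ sF ≤ F.r i0 ^ sG :=
        Real.rpow_le_rpow_of_exponent_ge (F.r_pos i0) (F.r_lt1 i0).le hcase
      have h5 : c2 * min (sF - sG) 1 ≤ F.r i0 ^ sG - F.r i0 ^ sF := by
        rw [h3, hc2_def]
        have hmin0 : 0 ≤ (1 - F.r i0) * min (sF - sG) 1 := by
          apply mul_nonneg (by linarith [F.r_lt1 i0])
          exact le_min (by linarith) zero_le_one
        calc F.r i0 ^ sF * (1 - F.r i0) * min (sF - sG) 1
            = F.r i0 ^ sF * ((1 - F.r i0) * min (sF - sG) 1) := by ring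
          _ ≤ F.r i0 ^ sG * ((1 - F.r i0) * min (sF - sG) 1) :=
              mul_le_mul_of_nonneg_right hpow_le hmin0
          _ ≤ F.r i0 ^ sG * (1 - F.r i0 ^ (sF - sG)) :=
              mul_le_mul_of_nonneg_left h4 (Real.rpow_nonneg (F.r_pos i0).le _)
          _ = F.r i0 ^ sG - F.r i0 ^ sG * F.r i0 ^ (sF - sG) := by ring
      have habs : |sG - sF| = sF - sG := by
        rw [abs_sub_comm]
        exact abs_of_nonneg (by linarith)
      have h6 : (∑ i, F.r i ^ sG) - 1 ≤ |∑ i, F.r i ^ sG - 1| := le_abs_self _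
      calc min |sG - sF| 1 * c2 = c2 * min (sF - sG) 1 := by rw [habs]; ring
        _ ≤ F.r i0 ^ sG - F.r i0 ^ sF := h5
        _ ≤ (∑ i, F.r i ^ sG) - 1 := by linarith
        _ ≤ |∑ i, F.r i ^ sG - 1| := h6
        _ ≤ N * (C1 * e) := hsum
  have hminle : min |sG - sF| 1 ≤ N * C1 * e / c2 := by
    rw [le_div_iff₀ hc20]
    calc min |sG - sF| 1 * c2 ≤ N * (C1 * e) := hmin
      _ = N * C1 * e := by ring
  have hcc : ∀ i, |F.r i ^ sF - G.r i ^ sG| ≤ C3 * e := by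
    intro i
    have hA : |F.r i ^ sF - F.r i ^ sG| ≤ max L2 1 * min |sG - sF| 1 := by
      rcases le_total |sG - sF| 1 with hle | hle
      · rw [min_eq_left hle]
        have h := S17.rpow_exp_diff (F.r_pos i) (F.r_lt1 i).le hsF0 hsG0
        have hlog : -Real.log (F.r i) ≤ L2 := by
          rw [hL2_def]
          have := Real.log_le_log hm'0 (haIn i).1
          linarith
        calc |F.r i ^ sF - F.r i ^ sG| ≤ |sF - sG| * (-Real.log (F.r i)) := h
          _ ≤ |sF - sG| * L2 := mul_le_mul_of_nonneg_left hlog (abs_nonneg _)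
          _ = L2 * |sG - sF| := by rw [abs_sub_comm]; ring
          _ ≤ max L2 1 * |sG - sF| :=
              mul_le_mul_of_nonneg_right (le_max_left _ _) (abs_nonneg _)
      · rw [min_eq_right hle]
        have h1 : F.r i ^ sF ≤ 1 := Real.rpow_le_one (F.r_pos i).le (F.r_lt1 i).le hsF0
        have h2 : F.r i ^ sG ≤ 1 := Real.rpow_le_one (F.r_pos i).le (F.r_lt1 i).le hsG0
        have h3 : 0 ≤ F.r i ^ sF := hcF0 i
        have h4 : 0 ≤ F.r i ^ sG := Real.rpow_nonneg (F.r_pos i).le _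
        have h5 : |F.r i ^ sF - F.r i ^ sG| ≤ 1 := abs_le.2 ⟨by linarith, by linarith⟩
        calc |F.r i ^ sF - F.r i ^ sG| ≤ 1 := h5
          _ ≤ max L2 1 * 1 := by rw [mul_one]; exact le_max_right _ _
    calc |F.r i ^ sF - G.r i ^ sG|
        ≤ |F.r i ^ sF - F.r i ^ sG| + |F.r i ^ sG - G.r i ^ sG| := abs_sub_le _ _ _
      _ ≤ max L2 1 * min |sG - sF| 1 + C1 * e := add_le_add hA (hbase i)
      _ ≤ max L2 1 * (N * C1 * e / c2) + C1 * e := by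
          have := mul_le_mul_of_nonneg_left hminle (le_trans zero_le_one (le_max_right L2 1))
          linarith
      _ = C3 * e := by rw [hC3_def]; field_simp; ring
  have hccsum : ∑ i, |F.r i ^ sF - G.r i ^ sG| ≤ N * (C3 * e) := by
    calc ∑ i, |F.r i ^ sF - G.r i ^ sG| ≤ ∑ _i : Fin N, C3 * e :=
          Finset.sum_le_sum fun i _ => hcc i
      _ = N * (C3 * e) := by
          rw [Finset.sum_const, Finset.card_univ, Fintype.card_fin, nsmul_eq_mul]
  -- iteration machinery
  have hFcont : ∀ i, Continuous (F.f i) := fun i => S17.cont_of_sim (F.r_pos i).le (F.sim i)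
  have hGcont : ∀ i, Continuous (G.f i) := fun i => S17.cont_of_sim (G.r_pos i).le (G.sim i)
  have hFmaps : ∀ i, ∀ x ∈ X, F.f i x ∈ X := fun i x hx => F.maps i ⟨x, hx, rfl⟩
  have hGmaps : ∀ i, ∀ x ∈ X, G.f i x ∈ X := fun i x hx => G.maps i ⟨x, hx, rfl⟩
  have hFρ : ∀ i, F.r i ≤ R' := fun i => (hMA_ge i).trans hMAR'
  have hcF1 : ∑ i, (fun j => F.r j ^ sF) i = 1 := hsF
  have hcG1 : ∑ i, (fun j => G.r j ^ sG) i = 1 := hsG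
  have claimF := S17.iterA_mod (X := X) (c := fun j => F.r j ^ sF) (ρ := F.r) (h := F.f)
    (φ0 := φ) (R' := R') (η := η) (θ := θ/2) hR'0.le hFmaps F.sim hFρ hcF0 hcF1 hmodη
  have claimG := S17.iterA_mod (X := X) (c := fun j => G.r j ^ sG) (ρ := G.r) (h := G.f)
    (φ0 := φ) (R' := R') (η := η) (θ := θ/2) hR'0.le hGmaps G.sim hbR hcG0 hcG1 hmodη
  have claimG' := S17.iterA_mod (X := X) (c := fun j => G.r j ^ sG) (ρ := G.r) (h := G.f)
    (φ0 := φ) (R' := R') (η := η') (θ := θ'/2) hR'0.le hGmaps G.sim hbR hcG0 hcG1 hmodη'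
  have hmodGk : ∀ m : ℕ, ∀ u ∈ X, ∀ v ∈ X, dist u v ≤ δ →
      |S17.iterA (fun j => G.r j ^ sG) G.f (⇑φ) m u
        - S17.iterA (fun j => G.r j ^ sG) G.f (⇑φ) m v| ≤ η' := by
    intro m u hu v hv hd
    apply claimG' m u hu v hv
    have hpow : R' ^ m ≤ 1 := pow_le_one₀ hR'0.le hR'1.le
    calc dist u v * R' ^ m ≤ dist u v * 1 := mul_le_mul_of_nonneg_left hpow dist_nonneg
      _ = dist u v := mul_one _
      _ ≤ θ'/2 := hd.trans hδθ'
  have hMG : ∀ m : ℕ, ∀ x, |S17.iterA (fun j => G.r j ^ sG) G.f (⇑φ) m x| ≤ M :=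
    fun m x => S17.iterA_bound hcG0 hcG1 hφM m x
  have hcomp := S17.iterA_compare (X := X) hFmaps hGmaps hcF0 hcF1
    (fun i x hx => hDle i x hx) hmodGk hMG hccsum k x0 hx0X
  -- invariance of attractors
  have hinvF : ∀ i, F.f i '' F.K ⊆ F.K := by
    intro i
    have h1 : F.f i '' F.K ⊆ ⋃ j, F.f j '' F.K := subset_iUnion (fun j => F.f j '' F.K) i
    rwa [← F.K_inv] at h1
  have hinvG : ∀ i, G.f i '' G.K ⊆ G.K := by
    intro i
    have h1 : G.f i '' G.K ⊆ ⋃ j, G.f j '' G.K := subset_iUnion (fun j => G.f j '' G.K) i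
    rwa [← G.K_inv] at h1
  have hconcF : μF F.Kᶜ = 0 :=
    S17.conc F.K_cpt.isClosed F.K_ne hinvF F.sim hFcont hFρ hR'0 hR'1 hcF0 hcF1 hμFss
  have hconcG : μG G.Kᶜ = 0 :=
    S17.conc G.K_cpt.isClosed G.K_ne hinvG G.sim hGcont hbR hR'0 hR'1 hcG0 hcG1 hμGrel
  have haeF : ∀ᵐ x ∂μF, x ∈ F.K := by
    rw [MeasureTheory.ae_iff]
    exact hconcF
  have haeG : ∀ᵐ x ∂μG, x ∈ G.K := by
    rw [MeasureTheory.ae_iff]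
    exact hconcG
  -- invariance of integrals
  have hintF := S17.iterA_integral (μ := μF) (c := fun j => F.r j ^ sF) (h := F.f)
    (φ0 := φ) (M := M) hFcont hcF0 hcF1 φ.continuous hφM hμFss k
  have hintG := S17.iterA_integral (μ := μG) (c := fun j => G.r j ^ sG) (h := G.f)
    (φ0 := φ) (M := M) hGcont hcG0 hcG1 φ.continuous hφM hμGrel k
  -- integral concentration estimates
  have hestF : |(∫ x, φ x ∂μF) - S17.iterA (fun j => F.r j ^ sF) F.f (⇑φ) k x0| ≤ η := by
    set ψ := S17.iterA (fun j => F.r j ^ sF) F.f (⇑φ) k with hψ_def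
    have hψcont : Continuous ψ := S17.iterA_cont hFcont φ.continuous k
    have hψbd : ∀ x, |ψ x| ≤ M := S17.iterA_bound hcF0 hcF1 hφM k
    have hψint : Integrable ψ μF :=
      ⟨hψcont.aestronglyMeasurable,
        HasFiniteIntegral.of_bounded (C := M)
          (Eventually.of_forall fun x => by rw [Real.norm_eq_abs]; exact hψbd x)⟩
    have hsub : ∫ x, (ψ x - ψ x0) ∂μF = (∫ x, φ x ∂μF) - ψ x0 := by
      rw [integral_sub hψint (integrable_const _), integral_const, probReal_univ]
      rw [hψ_def, hintF]
      simp
    rw [← hsub]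
    have hae : ∀ᵐ x ∂μF, ‖ψ x - ψ x0‖ ≤ η := by
      refine haeF.mono fun x hx => ?_
      rw [Real.norm_eq_abs]
      apply claimF k x (F.K_sub hx) x0 hx0X
      calc dist x x0 * R' ^ k
          ≤ D0 * R' ^ k := by
            apply mul_le_mul_of_nonneg_right _ (pow_nonneg hR'0.le k)
            exact dist_le_diam_of_mem hXbd (F.K_sub hx) hx0X
        _ ≤ θ/2 := hkD
    calc |∫ x, (ψ x - ψ x0) ∂μF| = ‖∫ x, (ψ x - ψ x0) ∂μF‖ := (Real.norm_eq_abs _).symm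
      _ ≤ η * (μF univ).toReal := norm_integral_le_of_norm_le_const hae
      _ = η := by rw [measure_univ]; simp
  have hestG : |(∫ x, φ x ∂μG) - S17.iterA (fun j => G.r j ^ sG) G.f (⇑φ) k x0| ≤ η := by
    set ψ := S17.iterA (fun j => G.r j ^ sG) G.f (⇑φ) k with hψ_def
    have hψcont : Continuous ψ := S17.iterA_cont hGcont φ.continuous k
    have hψbd : ∀ x, |ψ x| ≤ M := S17.iterA_bound hcG0 hcG1 hφM k
    have hψint : Integrable ψ μG :=
      ⟨hψcont.aestronglyMeasurable,
        HasFiniteIntegral.of_bounded (C := M)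
          (Eventually.of_forall fun x => by rw [Real.norm_eq_abs]; exact hψbd x)⟩
    have hsub : ∫ x, (ψ x - ψ x0) ∂μG = (∫ x, φ x ∂μG) - ψ x0 := by
      rw [integral_sub hψint (integrable_const _), integral_const, probReal_univ]
      rw [hψ_def, hintG]
      simp
    rw [← hsub]
    have hae : ∀ᵐ x ∂μG, ‖ψ x - ψ x0‖ ≤ η := by
      refine haeG.mono fun x hx => ?_
      rw [Real.norm_eq_abs]
      apply claimG k x (G.K_sub hx) x0 hx0X
      calc dist x x0 * R' ^ k
          ≤ D0 * R' ^ k := by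
            apply mul_le_mul_of_nonneg_right _ (pow_nonneg hR'0.le k)
            exact dist_le_diam_of_mem hXbd (G.K_sub hx) hx0X
        _ ≤ θ/2 := hkD
    calc |∫ x, (ψ x - ψ x0) ∂μG| = ‖∫ x, (ψ x - ψ x0) ∂μG‖ := (Real.norm_eq_abs _).symm
      _ ≤ η * (μG univ).toReal := norm_integral_le_of_norm_le_const hae
      _ = η := by rw [measure_univ]; simp
  -- the comparison bound
  have hcompare : |S17.iterA (fun j => F.r j ^ sF) F.f (⇑φ) k x0
      - S17.iterA (fun j => G.r j ^ sG) G.f (⇑φ) k x0| ≤ ε/2 := by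
    have hk1 : (k:ℝ) ≤ (k:ℝ) + 1 := by linarith
    have hk0 : (0:ℝ) ≤ k := Nat.cast_nonneg k
    have h1 : (k:ℝ) * η' ≤ ε/4 := by
      rw [hη'_def]
      calc (k:ℝ) * (ε / (4 * (k+1)))
          ≤ ((k:ℝ)+1) * (ε / (4 * (k+1))) :=
            mul_le_mul_of_nonneg_right hk1 (by positivity)
        _ = ε/4 := by
            have hk1' : ((k:ℝ)+1) ≠ 0 := by positivity
            field_simp
    have hNC3M : (0:ℝ) ≤ N * C3 * M := by positivity
    have h2 : (k:ℝ) * (N * (C3 * e) * M) ≤ ε/4 := by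
      calc (k:ℝ) * (N * (C3 * e) * M) = (N * C3 * M) * ((k:ℝ) * e) := by ring
        _ ≤ (N * C3 * M + 1) * (((k:ℝ)+1) * e) := by
            have ha : (N * C3 * M) * ((k:ℝ) * e) ≤ (N * C3 * M) * (((k:ℝ)+1) * e) :=
              mul_le_mul_of_nonneg_left (mul_le_mul_of_nonneg_right hk1 he0) hNC3M
            have hb : (N * C3 * M) * (((k:ℝ)+1) * e) ≤ (N * C3 * M + 1) * (((k:ℝ)+1) * e) :=
              mul_le_mul_of_nonneg_right (by linarith)
                (mul_nonneg (by positivity) he0)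
            linarith
        _ ≤ (N * C3 * M + 1) * (((k:ℝ)+1) * (ε / (4 * (k+1) * (N * C3 * M + 1)))) := by
            apply mul_le_mul_of_nonneg_left _ (by positivity)
            exact mul_le_mul_of_nonneg_left he_ε (by positivity)
        _ = ε/4 := by
            have h4 : ((k:ℝ)+1) ≠ 0 := by positivity
            have h5 : (N * C3 * M + 1) ≠ 0 := by positivity
            field_simp
    calc |S17.iterA (fun j => F.r j ^ sF) F.f (⇑φ) k x0
        - S17.iterA (fun j => G.r j ^ sG) G.f (⇑φ) k x0|
        ≤ (k:ℝ) * (η' + (N * (C3 * e)) * M) := hcomp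
      _ = (k:ℝ) * η' + (k:ℝ) * (N * (C3 * e) * M) := by ring
      _ ≤ ε/4 + ε/4 := add_le_add h1 h2
      _ = ε/2 := by ring
  -- final assembly
  set AF := ∫ x, φ x ∂μF
  set AG := ∫ x, φ x ∂μG
  set BF := S17.iterA (fun j => F.r j ^ sF) F.f (⇑φ) k x0
  set BG := S17.iterA (fun j => G.r j ^ sG) G.f (⇑φ) k x0
  have h1 : |AF - AG| ≤ |AF - BF| + |BF - BG| + |BG - AG| := by
    calc |AF - AG| = |(AF - BF) + (BF - BG) + (BG - AG)| := by ring_nf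
      _ ≤ |AF - BF| + |BF - BG| + |BG - AG| := abs_add_three _ _ _
  have h2 : |BG - AG| = |AG - BG| := abs_sub_comm _ _
  calc |AF - AG| ≤ |AF - BF| + |BF - BG| + |BG - AG| := h1
    _ ≤ η + ε/2 + η := by
        rw [h2]
        exact add_le_add (add_le_add hestF hcompare) hestG
    _ = ε := by rw [hη_def]; ring
end
end
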